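/- arXiv:2207.07544 — 4 statements merged into one kernel-verified Lean document; each statement's English description precedes it below -/
import Mathlib

section
/- A stochastic kernel Ψ on S1×S2 given S3 is semi-uniform Feller if and only if Ψ is WTV-continuous, i.e., for each open set O ⊆ S1 and each sequence s3^(n) converging to s3 in S3, liminf_{n→∞} inf_{B ∈ B(S2)} ( Ψ(O×B|s3^(n)) − Ψ(O×B|s3) ) ≥ 0. -/
open MeasureTheory ProbabilityTheory Filter Topology
set_option linter.unusedSectionVars false
set_option linter.unusedVariables false

section Aux
open Set
variable {S1 S2 : Type*} [MetricSpace S1] [MeasurableSpace S1] [BorelSpace S1]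
  [MetricSpace S2] [MeasurableSpace S2] [BorelSpace S2]
  [SecondCountableTopology S1] [SecondCountableTopology S2]

lemma aux_prod_inter (O : Set S1) (B : Set S2) :
    (Prod.fst ⁻¹' O : Set (S1 × S2)) ∩ univ ×ˢ B = O ×ˢ B := by
  ext x; simp [Set.mem_prod, and_comm]

lemma aux_ind_int (μ : Measure (S1 × S2)) {O : Set S1} (hO : MeasurableSet O)
    {B : Set S2} (hB : MeasurableSet B) :
    ∫ x in univ ×ˢ B, O.indicator (fun _ => (1:ℝ)) x.1 ∂μ = (μ (O ×ˢ B)).toReal := by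
  have h1 : (fun x : S1 × S2 => O.indicator (fun _ => (1:ℝ)) x.1)
      = (Prod.fst ⁻¹' O).indicator (fun _ => (1:ℝ)) := by
    funext x
    exact (Set.indicator_comp_right (g := fun _ : S1 => (1:ℝ)) Prod.fst (s := O)).symm
  rw [h1, integral_indicator_const (1:ℝ) (hO.preimage measurable_fst),
    measureReal_def, Measure.restrict_apply (hO.preimage measurable_fst), aux_prod_inter, smul_eq_mul, mul_one]

lemma aux_mass (μ : Measure (S1 × S2)) [IsProbabilityMeasure μ]
    {B : Set S2} (hB : MeasurableSet B) :
    (μ (univ ×ˢ B)).toReal + (μ (univ ×ˢ Bᶜ)).toReal = 1 := by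
  have h : (univ ×ˢ Bᶜ : Set (S1 × S2)) = (univ ×ˢ B)ᶜ := by ext x; simp
  rw [h, ← ENNReal.toReal_add (measure_ne_top _ _) (measure_ne_top _ _),
    measure_add_measure_compl (MeasurableSet.univ.prod hB), measure_univ, ENNReal.toReal_one]

lemma aux_int_bound (μ : Measure (S1 × S2)) [IsProbabilityMeasure μ] (f : BoundedContinuousFunction S1 ℝ)
    (B : Set S2) : |∫ x in univ ×ˢ B, f x.1 ∂μ| ≤ ‖f‖ := by
  have h := norm_setIntegral_le_of_norm_le_const (μ := μ) (s := univ ×ˢ B)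
    (f := fun x : S1 × S2 => f x.1) (C := ‖f‖) (measure_lt_top _ _)
    (fun x _ => f.norm_coe_le_norm x.1)
  calc |∫ x in univ ×ˢ B, f x.1 ∂μ| ≤ ‖f‖ * (μ (univ ×ˢ B)).toReal := h
    _ ≤ ‖f‖ * 1 := by
        apply mul_le_mul_of_nonneg_left _ (norm_nonneg f)
        exact ENNReal.toReal_le_of_le_ofReal one_pos.le (by simpa using prob_le_one)
    _ = ‖f‖ := mul_one _

lemma aux_toReal_le_one (μ : Measure (S1 × S2)) [IsProbabilityMeasure μ] (s : Set (S1 × S2)) :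
    (μ s).toReal ≤ 1 :=
  ENNReal.toReal_le_of_le_ofReal one_pos.le (by simpa using prob_le_one)


lemma aux_count (c : ℝ) (hc0 : 0 ≤ c) (k : ℕ) (hck : c ≤ k) :
    (Finset.range k).filter (fun i : ℕ => ((i:ℝ)+1) < c) = Finset.range (⌈c⌉₊ - 1) := by
  ext i
  simp only [Finset.mem_filter, Finset.mem_range]
  have hceil : ⌈c⌉₊ ≤ k := Nat.ceil_le.2 hck
  constructor
  · rintro ⟨hik, hic⟩
    have h : (i+1 : ℕ) < ⌈c⌉₊ := Nat.lt_ceil.2 (by push_cast; linarith)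
    omega
  · intro hi
    have h2 : i + 1 < ⌈c⌉₊ := by omega
    have h3 := Nat.lt_ceil.1 h2
    push_cast at h3
    exact ⟨by omega, by linarith⟩


lemma aux_step_sum (k : ℕ) (hk : 0 < k) (f : BoundedContinuousFunction S1 ℝ)
    (hf : ∀ y, f y ∈ Icc (0:ℝ) 1) (x : S1) :
    (∑ i ∈ Finset.range k, ({y : S1 | ((i:ℝ)+1)/k < f y}.indicator (fun _ => (1:ℝ)) x))
      = ((⌈f x * k⌉₊ - 1 : ℕ) : ℝ) := by
  have hkR : (0:ℝ) < k := by exact_mod_cast hk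
  have h1 : ∀ i : ℕ, ({y : S1 | ((i:ℝ)+1)/k < f y}.indicator (fun _ => (1:ℝ)) x)
      = if ((i:ℝ)+1) < f x * k then 1 else 0 := by
    intro i
    rw [Set.indicator_apply]
    congr 1
    simp only [mem_setOf_eq, eq_iff_iff]
    rw [div_lt_iff₀ hkR]
  simp_rw [h1]
  rw [Finset.sum_boole, aux_count (f x * k) (by nlinarith [(hf x).1]) k (by nlinarith [(hf x).2])]
  simp

lemma aux_step_bounds (k : ℕ) (hk : 0 < k) (f : BoundedContinuousFunction S1 ℝ)
    (hf : ∀ y, f y ∈ Icc (0:ℝ) 1) (x : S1) :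
    (∑ i ∈ Finset.range k, ({y : S1 | ((i:ℝ)+1)/k < f y}.indicator (fun _ => (1:ℝ)) x)) / k ≤ f x
    ∧ f x ≤ (∑ i ∈ Finset.range k, ({y : S1 | ((i:ℝ)+1)/k < f y}.indicator (fun _ => (1:ℝ)) x)) / k
        + 1/k := by
  have hkR : (0:ℝ) < k := by exact_mod_cast hk
  rw [aux_step_sum k hk f hf x]
  set c := f x * k with hc
  have hc0 : 0 ≤ c := by nlinarith [(hf x).1]
  have hfx : f x = c / k := by field_simp [hc]; exact hc.symm
  constructor
  · rcases Nat.eq_zero_or_pos ⌈c⌉₊ with h | h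
    · simp [h]; exact (hf x).1
    · have h2 : ((⌈c⌉₊ - 1 : ℕ) : ℝ) = (⌈c⌉₊ : ℝ) - 1 := by
        push_cast [h]; ring
      have h3 : (⌈c⌉₊ : ℝ) < c + 1 := Nat.ceil_lt_add_one hc0
      rw [h2, hfx]
      rw [div_le_div_iff₀ hkR hkR]
      nlinarith
  · rcases Nat.eq_zero_or_pos ⌈c⌉₊ with h | h
    · have hc' : c ≤ 0 := Nat.ceil_eq_zero.1 h
      have hce : c = 0 := le_antisymm hc' hc0
      rw [hfx, hce]
      simp

    · have h2 : ((⌈c⌉₊ - 1 : ℕ) : ℝ) = (⌈c⌉₊ : ℝ) - 1 := by push_cast [h]; ring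
      have h3 : c ≤ (⌈c⌉₊ : ℝ) := Nat.le_ceil c
      rw [h2, hfx, ← add_div, div_le_div_iff₀ hkR hkR]
      nlinarith

lemma aux_fst_integrable (μ : Measure (S1 × S2)) [IsFiniteMeasure μ]
    (f : BoundedContinuousFunction S1 ℝ) (B : Set S2) :
    Integrable (fun x : S1 × S2 => f x.1) (μ.restrict (univ ×ˢ B)) :=
  (f.compContinuous (⟨Prod.fst, continuous_fst⟩ : C(S1 × S2, S1))).integrable _

lemma aux_ind_integrable (μ : Measure (S1 × S2)) [IsFiniteMeasure μ]
    {O : Set S1} (hO : MeasurableSet O) (B : Set S2) :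
    Integrable (fun x : S1 × S2 => O.indicator (fun _ => (1:ℝ)) x.1) (μ.restrict (univ ×ˢ B)) := by
  have h1 : (fun x : S1 × S2 => O.indicator (fun _ => (1:ℝ)) x.1)
      = (Prod.fst ⁻¹' O).indicator (fun _ => (1:ℝ)) := by
    funext x
    exact (Set.indicator_comp_right (g := fun _ : S1 => (1:ℝ)) Prod.fst (s := O)).symm
  rw [h1]
  exact (integrable_const (1:ℝ)).indicator (hO.preimage measurable_fst)

lemma aux_step_integrable (μ : Measure (S1 × S2)) [IsFiniteMeasure μ] (k : ℕ)
    (f : BoundedContinuousFunction S1 ℝ) (B : Set S2) :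
    Integrable (fun x : S1 × S2 =>
      (∑ i ∈ Finset.range k, ({y : S1 | ((i:ℝ)+1)/k < f y}.indicator (fun _ => (1:ℝ)) x.1)) / k)
      (μ.restrict (univ ×ˢ B)) := by
  apply Integrable.div_const
  apply integrable_finset_sum
  intro i _
  exact aux_ind_integrable μ (isOpen_lt continuous_const f.continuous).measurableSet B

lemma aux_step_integral (μ : Measure (S1 × S2)) [IsFiniteMeasure μ] (k : ℕ)
    (f : BoundedContinuousFunction S1 ℝ) {B : Set S2} (hB : MeasurableSet B) :
    ∫ x in univ ×ˢ B,
        (∑ i ∈ Finset.range k, ({y : S1 | ((i:ℝ)+1)/k < f y}.indicator (fun _ => (1:ℝ)) x.1)) / k ∂μ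
      = (∑ i ∈ Finset.range k, (μ ({y : S1 | ((i:ℝ)+1)/k < f y} ×ˢ B)).toReal) / k := by
  rw [integral_div]
  congr 1
  rw [integral_finset_sum _ (fun i _ =>
    aux_ind_integrable μ (isOpen_lt continuous_const f.continuous).measurableSet B)]
  exact Finset.sum_congr rfl fun i _ =>
    aux_ind_int μ (isOpen_lt continuous_const f.continuous).measurableSet hB

lemma aux_lower (μn : ℕ → Measure (S1 × S2)) (μ : Measure (S1 × S2))
    [∀ n, IsProbabilityMeasure (μn n)] [IsProbabilityMeasure μ]
    (H : ∀ O : Set S1, IsOpen O → ∀ ε : ℝ, 0 < ε → ∀ᶠ n in atTop, ∀ B : Set S2, MeasurableSet B →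
      (μ (O ×ˢ B)).toReal - ε ≤ ((μn n) (O ×ˢ B)).toReal)
    (f : BoundedContinuousFunction S1 ℝ) (hf : ∀ y, f y ∈ Icc (0:ℝ) 1)
    {ε : ℝ} (hε : 0 < ε) :
    ∀ᶠ n in atTop, ∀ B : Set S2, MeasurableSet B →
      (∫ x in univ ×ˢ B, f x.1 ∂μ) - ε ≤ ∫ x in univ ×ˢ B, f x.1 ∂(μn n) := by
  obtain ⟨k, hk0, hk⟩ : ∃ k : ℕ, 0 < k ∧ 1/(k:ℝ) ≤ ε/2 := by
    refine ⟨⌈2/ε⌉₊ + 1, Nat.succ_pos _, ?_⟩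
    have h1 : 2/ε ≤ (⌈2/ε⌉₊ + 1 : ℕ) := by
      push_cast
      linarith [Nat.le_ceil (2/ε)]
    have hkR : (0:ℝ) < (⌈2/ε⌉₊ + 1 : ℕ) := by positivity
    rw [div_le_div_iff₀ hkR (by norm_num : (0:ℝ) < 2)]
    rw [div_le_iff₀ hε] at h1
    linarith
  have hkR : (0:ℝ) < k := by exact_mod_cast hk0
  have hOi : ∀ i : ℕ, IsOpen {y : S1 | ((i:ℝ)+1)/k < f y} :=
    fun i => isOpen_lt continuous_const f.continuous
  have Hev : ∀ᶠ n in atTop, ∀ i ∈ Finset.range k, ∀ B : Set S2, MeasurableSet B →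
      (μ ({y : S1 | ((i:ℝ)+1)/k < f y} ×ˢ B)).toReal - ε/2
        ≤ ((μn n) ({y : S1 | ((i:ℝ)+1)/k < f y} ×ˢ B)).toReal :=
    (eventually_all_finset _).2 fun i _ => H _ (hOi i) (ε/2) (by linarith)
  filter_upwards [Hev] with n hn B hB
  set st : (S1 × S2) → ℝ := fun x =>
    (∑ i ∈ Finset.range k, ({y : S1 | ((i:ℝ)+1)/k < f y}.indicator (fun _ => (1:ℝ)) x.1)) / k
    with hst
  -- ∫ f dμ_B ≤ ∫ st dμ_B + 1/k
  have h1 : ∫ x in univ ×ˢ B, f x.1 ∂μ ≤ (∫ x in univ ×ˢ B, st x ∂μ) + 1/k := by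
    have hmono : ∀ x : S1 × S2, f x.1 ≤ st x + 1/k :=
      fun x => (aux_step_bounds k hk0 f hf x.1).2
    calc ∫ x in univ ×ˢ B, f x.1 ∂μ ≤ ∫ x in univ ×ˢ B, (st x + 1/k) ∂μ :=
          integral_mono (aux_fst_integrable μ f B)
            ((aux_step_integrable μ k f B).add (integrable_const _)) hmono
      _ = (∫ x in univ ×ˢ B, st x ∂μ) + ∫ x in univ ×ˢ B, (1/(k:ℝ)) ∂μ :=
          integral_add (aux_step_integrable μ k f B) (integrable_const _)
      _ ≤ (∫ x in univ ×ˢ B, st x ∂μ) + 1/k := by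
          rw [setIntegral_const, smul_eq_mul, measureReal_def]
          have := aux_toReal_le_one μ (univ ×ˢ B)
          have h1k : (0:ℝ) ≤ 1/(k:ℝ) := by positivity
          nlinarith
  -- step integral comparison
  have h2 : ∫ x in univ ×ˢ B, st x ∂μ ≤ (∫ x in univ ×ˢ B, st x ∂(μn n)) + ε/2 := by
    rw [hst, aux_step_integral μ k f hB, aux_step_integral (μn n) k f hB]
    have hsum : (∑ i ∈ Finset.range k, (μ ({y : S1 | ((i:ℝ)+1)/k < f y} ×ˢ B)).toReal)
        ≤ (∑ i ∈ Finset.range k, ((μn n) ({y : S1 | ((i:ℝ)+1)/k < f y} ×ˢ B)).toReal)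
          + k * (ε/2) := by
      calc (∑ i ∈ Finset.range k, (μ ({y : S1 | ((i:ℝ)+1)/k < f y} ×ˢ B)).toReal)
          ≤ ∑ i ∈ Finset.range k,
            (((μn n) ({y : S1 | ((i:ℝ)+1)/k < f y} ×ˢ B)).toReal + ε/2) :=
            Finset.sum_le_sum fun i hi => by linarith [hn i hi B hB]
        _ = (∑ i ∈ Finset.range k, ((μn n) ({y : S1 | ((i:ℝ)+1)/k < f y} ×ˢ B)).toReal)
            + k * (ε/2) := by
            rw [Finset.sum_add_distrib, Finset.sum_const, Finset.card_range, nsmul_eq_mul]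
    rw [div_add' _ _ _ (ne_of_gt hkR)]
    apply div_le_div_of_nonneg_right ?_ hkR.le
    · calc _ ≤ (∑ i ∈ Finset.range k, ((μn n) ({y : S1 | ((i:ℝ)+1)/k < f y} ×ˢ B)).toReal)
            + k * (ε/2) := hsum
        _ = _ := by ring
  -- ∫ st dμn ≤ ∫ f dμn
  have h3 : ∫ x in univ ×ˢ B, st x ∂(μn n) ≤ ∫ x in univ ×ˢ B, f x.1 ∂(μn n) :=
    integral_mono (aux_step_integrable (μn n) k f B) (aux_fst_integrable (μn n) f B)
      fun x => (aux_step_bounds k hk0 f hf x.1).1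
  linarith

lemma aux_mass_conv (μn : ℕ → Measure (S1 × S2)) (μ : Measure (S1 × S2))
    [∀ n, IsProbabilityMeasure (μn n)] [IsProbabilityMeasure μ]
    (H : ∀ O : Set S1, IsOpen O → ∀ ε : ℝ, 0 < ε → ∀ᶠ n in atTop, ∀ B : Set S2, MeasurableSet B →
      (μ (O ×ˢ B)).toReal - ε ≤ ((μn n) (O ×ˢ B)).toReal)
    {ε : ℝ} (hε : 0 < ε) :
    ∀ᶠ n in atTop, ∀ B : Set S2, MeasurableSet B →
      |((μn n) (univ ×ˢ B)).toReal - (μ (univ ×ˢ B)).toReal| ≤ ε := by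
  filter_upwards [H univ isOpen_univ ε hε] with n hn B hB
  have h1 := hn B hB
  have h2 := hn Bᶜ hB.compl
  have e1 := aux_mass μ hB
  have e2 := aux_mass (μn n) hB
  rw [abs_le]
  constructor <;> linarith

lemma aux_both (μn : ℕ → Measure (S1 × S2)) (μ : Measure (S1 × S2))
    [∀ n, IsProbabilityMeasure (μn n)] [IsProbabilityMeasure μ]
    (H : ∀ O : Set S1, IsOpen O → ∀ ε : ℝ, 0 < ε → ∀ᶠ n in atTop, ∀ B : Set S2, MeasurableSet B →
      (μ (O ×ˢ B)).toReal - ε ≤ ((μn n) (O ×ˢ B)).toReal)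
    (f : BoundedContinuousFunction S1 ℝ) (hf : ∀ y, f y ∈ Icc (0:ℝ) 1)
    {ε : ℝ} (hε : 0 < ε) :
    ∀ᶠ n in atTop, ∀ B : Set S2, MeasurableSet B →
      |(∫ x in univ ×ˢ B, f x.1 ∂(μn n)) - ∫ x in univ ×ˢ B, f x.1 ∂μ| ≤ ε := by
  set g : BoundedContinuousFunction S1 ℝ := BoundedContinuousFunction.const S1 (1:ℝ) - f with hgdef
  have hg : ∀ y, g y ∈ Icc (0:ℝ) 1 := by
    intro y
    have := hf y
    have hy : g y = 1 - f y := by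
      simp [hgdef]
    rw [hy]
    constructor <;> [linarith [this.2]; linarith [this.1]]
  have key : ∀ (ν : Measure (S1 × S2)), IsProbabilityMeasure ν → ∀ B : Set S2, MeasurableSet B →
      ∫ x in univ ×ˢ B, g x.1 ∂ν = (ν (univ ×ˢ B)).toReal - ∫ x in univ ×ˢ B, f x.1 ∂ν := by
    intro ν hν B hB
    have : ∫ x in univ ×ˢ B, g x.1 ∂ν
        = ∫ x in univ ×ˢ B, ((1:ℝ) - f x.1) ∂ν := by
      apply integral_congr_ae
      filter_upwards with x
      simp [hgdef]
    rw [this, integral_sub (integrable_const _) (aux_fst_integrable ν f B),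
      setIntegral_const, smul_eq_mul, mul_one, measureReal_def]
  filter_upwards [aux_lower μn μ H f hf (half_pos hε), aux_lower μn μ H g hg (half_pos hε),
    aux_mass_conv μn μ H (half_pos hε)] with n h1 h2 h3 B hB
  have k1 := h1 B hB
  have k2 := h2 B hB
  have k3 := h3 B hB
  rw [key μ inferInstance B hB, key (μn n) inferInstance B hB] at k2
  rw [abs_le] at k3 ⊢
  constructor <;> linarith [k3.1, k3.2]

lemma aux_gen (μn : ℕ → Measure (S1 × S2)) (μ : Measure (S1 × S2))
    [∀ n, IsProbabilityMeasure (μn n)] [IsProbabilityMeasure μ]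
    (H : ∀ O : Set S1, IsOpen O → ∀ ε : ℝ, 0 < ε → ∀ᶠ n in atTop, ∀ B : Set S2, MeasurableSet B →
      (μ (O ×ˢ B)).toReal - ε ≤ ((μn n) (O ×ˢ B)).toReal)
    (f : BoundedContinuousFunction S1 ℝ) {ε : ℝ} (hε : 0 < ε) :
    ∀ᶠ n in atTop, ∀ B : Set S2, MeasurableSet B →
      |(∫ x in univ ×ˢ B, f x.1 ∂(μn n)) - ∫ x in univ ×ˢ B, f x.1 ∂μ| ≤ ε := by
  set c := ‖f‖ with hc
  have hc0 : 0 ≤ c := norm_nonneg f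
  have hcpos : (0:ℝ) < 2*c+1 := by linarith
  set g : BoundedContinuousFunction S1 ℝ := (2*c+1)⁻¹ • (f + BoundedContinuousFunction.const S1 c)
    with hgdef
  have hgy : ∀ y, g y = (2*c+1)⁻¹ * (f y + c) := by
    intro y; simp [hgdef]; ring
  have hg : ∀ y, g y ∈ Icc (0:ℝ) 1 := by
    intro y
    have h1 : |f y| ≤ c := f.norm_coe_le_norm y
    rw [abs_le] at h1
    rw [hgy]
    constructor
    · exact mul_nonneg (by positivity) (by linarith [h1.1])
    · rw [inv_mul_le_iff₀ hcpos, mul_one]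
      linarith [h1.2]
  have hfy : ∀ y : S1, f y = (2*c+1) * g y - c := by
    intro y
    rw [hgy]
    field_simp
    ring
  set ε1 := ε / (3*c+1) with he1
  have hε1 : 0 < ε1 := by positivity
  have key : ∀ (ν : Measure (S1 × S2)), IsProbabilityMeasure ν → ∀ B : Set S2, MeasurableSet B →
      ∫ x in univ ×ˢ B, f x.1 ∂ν
        = (2*c+1) * (∫ x in univ ×ˢ B, g x.1 ∂ν) - c * (ν (univ ×ˢ B)).toReal := by
    intro ν hν B hB
    have h0 : ∫ x in univ ×ˢ B, f x.1 ∂ν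
        = ∫ x in univ ×ˢ B, ((2*c+1) * g x.1 - c) ∂ν := by
      apply integral_congr_ae
      filter_upwards with x
      rw [← hfy]
    rw [h0, integral_sub ((aux_fst_integrable ν g B).const_mul _) (integrable_const _),
      MeasureTheory.integral_const_mul, setIntegral_const, smul_eq_mul, measureReal_def, mul_comm c]
  filter_upwards [aux_both μn μ H g hg hε1, aux_mass_conv μn μ H hε1] with n h1 h2 B hB
  have k1 := h1 B hB
  have k2 := h2 B hB
  rw [key μ inferInstance B hB, key (μn n) inferInstance B hB]
  have habs : |(2*c+1) * ((∫ x in univ ×ˢ B, g x.1 ∂(μn n)) - ∫ x in univ ×ˢ B, g x.1 ∂μ)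
      - c * (((μn n) (univ ×ˢ B)).toReal - (μ (univ ×ˢ B)).toReal)| ≤ (2*c+1) * ε1 + c * ε1 := by
    calc _ ≤ |(2*c+1) * ((∫ x in univ ×ˢ B, g x.1 ∂(μn n)) - ∫ x in univ ×ˢ B, g x.1 ∂μ)|
          + |c * (((μn n) (univ ×ˢ B)).toReal - (μ (univ ×ˢ B)).toReal)| := abs_sub _ _
      _ ≤ (2*c+1) * ε1 + c * ε1 := by
          rw [abs_mul, abs_mul, abs_of_pos hcpos, abs_of_nonneg hc0]
          have := mul_le_mul_of_nonneg_left k1 hcpos.le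
          have := mul_le_mul_of_nonneg_left k2 hc0
          exact add_le_add ‹_› ‹_›
  have heq : (2*c+1) * (∫ x in univ ×ˢ B, g x.1 ∂(μn n)) - c * (((μn n) (univ ×ˢ B)).toReal)
      - ((2*c+1) * (∫ x in univ ×ˢ B, g x.1 ∂μ) - c * ((μ (univ ×ˢ B)).toReal))
      = (2*c+1) * ((∫ x in univ ×ˢ B, g x.1 ∂(μn n)) - ∫ x in univ ×ˢ B, g x.1 ∂μ)
      - c * (((μn n) (univ ×ˢ B)).toReal - (μ (univ ×ˢ B)).toReal) := by ring
  rw [heq]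
  have : (2*c+1) * ε1 + c * ε1 = ε := by
    rw [he1]; field_simp; ring
  linarith [habs]

end Aux


/-- A stochastic kernel `Ψ` on `X × Y` given `T` is *semi-uniform Feller* if for every
sequence `t n → t` in `T` and every bounded continuous `f : X → ℝ`,
`sup_{B ∈ B(Y)} |∫ f dΨ(·, B | t n) − ∫ f dΨ(·, B | t)| → 0`, where `Ψ(A, B | t) = Ψ(A × B | t)`. -/
def SemiUniformFeller {X Y T : Type*} [TopologicalSpace X] [MeasurableSpace X]
    [MeasurableSpace Y] [TopologicalSpace T] [MeasurableSpace T]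
    (Ψ : Kernel T (X × Y)) : Prop :=
  ∀ (s : ℕ → T) (t : T), Tendsto s atTop (𝓝 t) → ∀ f : BoundedContinuousFunction X ℝ,
    Tendsto (fun n => ⨆ B : {B : Set Y // MeasurableSet B},
      |(∫ x in Set.univ ×ˢ B.1, f x.1 ∂(Ψ (s n))) - ∫ x in Set.univ ×ˢ B.1, f x.1 ∂(Ψ t)|)
      atTop (𝓝 0)

/-- A stochastic kernel `Ψ` on `S1 × S2` given `S3` is semi-uniform Feller if and only if it is
WTV-continuous: for each open `O ⊆ S1` and each sequence `s3⁽ⁿ⁾ → s3` in `S3`,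
`liminf_{n → ∞} inf_{B ∈ B(S2)} (Ψ(O × B | s3⁽ⁿ⁾) − Ψ(O × B | s3)) ≥ 0`. -/
theorem semiUniformFeller_iff_wtv_continuous
    {S1 S2 S3 : Type*}
    [MetricSpace S1] [TopologicalSpace.SeparableSpace S1] [MeasurableSpace S1] [BorelSpace S1]
    [StandardBorelSpace S1] [Nonempty S1]
    [MetricSpace S2] [TopologicalSpace.SeparableSpace S2] [MeasurableSpace S2] [BorelSpace S2]
    [StandardBorelSpace S2] [Nonempty S2]
    [MetricSpace S3] [TopologicalSpace.SeparableSpace S3] [MeasurableSpace S3] [BorelSpace S3]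
    [StandardBorelSpace S3] [Nonempty S3]
    (Ψ : Kernel S3 (S1 × S2)) [IsMarkovKernel Ψ] :
    SemiUniformFeller Ψ ↔
      ∀ (O : Set S1), IsOpen O → ∀ (s : ℕ → S3) (t : S3), Tendsto s atTop (𝓝 t) →
        0 ≤ Filter.liminf (fun n => ⨅ B : {B : Set S2 // MeasurableSet B},
          (((Ψ (s n)) (O ×ˢ B.1)).toReal - ((Ψ t) (O ×ˢ B.1)).toReal)) atTop := by
  haveI : SecondCountableTopology S1 := UniformSpace.secondCountable_of_separable S1
  haveI : SecondCountableTopology S2 := UniformSpace.secondCountable_of_separable S2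
  haveI : Nonempty {B : Set S2 // MeasurableSet B} := ⟨⟨∅, MeasurableSet.empty⟩⟩
  constructor
  · intro h O hO s t hst
    have key : ∀ (f : BoundedContinuousFunction S1 ℝ) (ε : ℝ), 0 < ε →
        ∀ᶠ n in atTop, ∀ B : Set S2, MeasurableSet B →
          |(∫ x in Set.univ ×ˢ B, f x.1 ∂(Ψ (s n))) - ∫ x in Set.univ ×ˢ B, f x.1 ∂(Ψ t)| ≤ ε := by
      intro f ε hε
      have htd := h s t hst f
      have h2 := htd.eventually_lt_const hε
      filter_upwards [h2] with n hn B hB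
      have hbdd : BddAbove (Set.range (fun B : {B : Set S2 // MeasurableSet B} =>
          |(∫ x in Set.univ ×ˢ B.1, f x.1 ∂(Ψ (s n))) - ∫ x in Set.univ ×ˢ B.1, f x.1 ∂(Ψ t)|)) := by
        refine ⟨2 * ‖f‖, ?_⟩
        rintro x ⟨C, rfl⟩
        calc |(∫ x in Set.univ ×ˢ C.1, f x.1 ∂(Ψ (s n))) - ∫ x in Set.univ ×ˢ C.1, f x.1 ∂(Ψ t)|
            ≤ |∫ x in Set.univ ×ˢ C.1, f x.1 ∂(Ψ (s n))|
              + |∫ x in Set.univ ×ˢ C.1, f x.1 ∂(Ψ t)| := abs_sub _ _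
          _ ≤ ‖f‖ + ‖f‖ := add_le_add (aux_int_bound _ f _) (aux_int_bound _ f _)
          _ = 2 * ‖f‖ := by ring
      exact le_trans (le_ciSup hbdd (⟨B, hB⟩ : {B : Set S2 // MeasurableSet B})) hn.le
    have evmain : ∀ ε : ℝ, 0 < ε → ∀ᶠ n in atTop,
        -ε ≤ ⨅ B : {B : Set S2 // MeasurableSet B},
          (((Ψ (s n)) (O ×ˢ B.1)).toReal - ((Ψ t) (O ×ˢ B.1)).toReal) := by
      intro ε hε
      set μ1 : Measure S1 := (Ψ t).map Prod.fst with hμ1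
      haveI : IsProbabilityMeasure μ1 := Measure.isProbabilityMeasure_map measurable_fst.aemeasurable
      obtain ⟨F, hFO, hFc, hF⟩ := hO.measurableSet.exists_isClosed_diff_lt
        (measure_ne_top μ1 O) (ε := ENNReal.ofReal (ε/2))
        (by simp only [ne_eq, ENNReal.ofReal_eq_zero, not_le]; linarith)
      obtain ⟨f, hf0, hf1, hf01⟩ := exists_bounded_zero_one_of_closed
        (hO.isClosed_compl) hFc (disjoint_compl_left.mono_right hFO)
      have measO := hO.measurableSet
      have measF := hFc.measurableSet
      filter_upwards [key f (ε/2) (half_pos hε)] with n hn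
      refine le_ciInf ?_
      rintro ⟨B, hB⟩
      have a4 := hn B hB
      have a1 : (∫ x in Set.univ ×ˢ B, f x.1 ∂(Ψ (s n))) ≤ ((Ψ (s n)) (O ×ˢ B)).toReal := by
        rw [← aux_ind_int (Ψ (s n)) measO hB]
        refine integral_mono (aux_fst_integrable _ f B) (aux_ind_integrable _ measO B) ?_
        intro x
        show f x.1 ≤ O.indicator (fun _ => (1:ℝ)) x.1
        by_cases hx : x.1 ∈ O
        · rw [Set.indicator_of_mem hx]
          exact (hf01 x.1).2
        · have h00 : f x.1 = 0 := hf0 hx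
          rw [Set.indicator_of_notMem hx, h00]
      have a2 : ((Ψ t) (F ×ˢ B)).toReal ≤ ∫ x in Set.univ ×ˢ B, f x.1 ∂(Ψ t) := by
        rw [← aux_ind_int (Ψ t) measF hB]
        refine integral_mono (aux_ind_integrable _ measF B) (aux_fst_integrable _ f B) ?_
        intro x
        show F.indicator (fun _ => (1:ℝ)) x.1 ≤ f x.1
        by_cases hx : x.1 ∈ F
        · have h11 : f x.1 = 1 := hf1 hx
          rw [Set.indicator_of_mem hx, h11]
        · rw [Set.indicator_of_notMem hx]
          exact (hf01 x.1).1
      have a3 : ((Ψ t) (O ×ˢ B)).toReal ≤ ((Ψ t) (F ×ˢ B)).toReal + ε/2 := by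
        have hsub : (O ×ˢ B : Set (S1 × S2)) ⊆ (F ×ˢ B) ∪ (Prod.fst ⁻¹' (O \ F)) := by
          rintro ⟨x, y⟩ ⟨hxO, hyB⟩
          by_cases hx : x ∈ F
          · exact Or.inl ⟨hx, hyB⟩
          · exact Or.inr ⟨hxO, hx⟩
        have hm : (Ψ t) (O ×ˢ B) ≤ (Ψ t) (F ×ˢ B) + (Ψ t) (Prod.fst ⁻¹' (O \ F)) :=
          le_trans (measure_mono hsub) (measure_union_le _ _)
        have hmap : (Ψ t) (Prod.fst ⁻¹' (O \ F)) = μ1 (O \ F) := by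
          rw [hμ1, Measure.map_apply measurable_fst (measO.diff measF)]
        have h5 : ((Ψ t) (Prod.fst ⁻¹' (O \ F))).toReal ≤ ε/2 := by
          rw [hmap]
          exact ENNReal.toReal_le_of_le_ofReal (by linarith) hF.le
        have h6 := ENNReal.toReal_mono
          (ENNReal.add_ne_top.2 ⟨measure_ne_top _ _, measure_ne_top _ _⟩) hm
        rw [ENNReal.toReal_add (measure_ne_top _ _) (measure_ne_top _ _)] at h6
        linarith
      rw [abs_le] at a4
      linarith [a4.1, a4.2]
    set g : ℕ → ℝ := fun n => ⨅ B : {B : Set S2 // MeasurableSet B},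
      (((Ψ (s n)) (O ×ˢ B.1)).toReal - ((Ψ t) (O ×ˢ B.1)).toReal) with hg
    have hlb : ∀ n (B : {B : Set S2 // MeasurableSet B}),
        -1 ≤ ((Ψ (s n)) (O ×ˢ B.1)).toReal - ((Ψ t) (O ×ˢ B.1)).toReal := by
      intro n B
      have h1 := aux_toReal_le_one (Ψ t) (O ×ˢ B.1)
      have h2 := ENNReal.toReal_nonneg (a := (Ψ (s n)) (O ×ˢ B.1))
      linarith
    have hub : ∀ n, g n ≤ 0 := by
      intro n
      have h0 : ((Ψ (s n)) (O ×ˢ ((∅:Set S2)))).toReal - ((Ψ t) (O ×ˢ ((∅:Set S2)))).toReal = 0 := by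
        simp [Set.prod_empty]
      calc g n ≤ ((Ψ (s n)) (O ×ˢ ((∅:Set S2)))).toReal - ((Ψ t) (O ×ˢ ((∅:Set S2)))).toReal :=
            ciInf_le ⟨-1, by rintro x ⟨B, rfl⟩; exact hlb n B⟩
              (⟨∅, MeasurableSet.empty⟩ : {B : Set S2 // MeasurableSet B})
        _ = 0 := h0
    have hcob : IsCoboundedUnder (· ≥ ·) atTop g :=
      (isBoundedUnder_of ⟨0, hub⟩).isCoboundedUnder_ge
    have hlim : ∀ ε : ℝ, 0 < ε → -ε ≤ liminf g atTop :=
      fun ε hε => le_liminf_of_le hcob (evmain ε hε)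
    by_contra hcon
    push_neg at hcon
    have := hlim (-(liminf g atTop)/2) (by linarith)
    linarith
  · intro h s t hst f
    have H : ∀ O : Set S1, IsOpen O → ∀ ε : ℝ, 0 < ε →
        ∀ᶠ n in atTop, ∀ B : Set S2, MeasurableSet B →
          ((Ψ t) (O ×ˢ B)).toReal - ε ≤ ((Ψ (s n)) (O ×ˢ B)).toReal := by
      intro O hO ε hε
      have h0 := h O hO s t hst
      have hlbd : ∀ n (B : {B : Set S2 // MeasurableSet B}),
          -1 ≤ ((Ψ (s n)) (O ×ˢ B.1)).toReal - ((Ψ t) (O ×ˢ B.1)).toReal := by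
        intro n B
        have h1 := aux_toReal_le_one (Ψ t) (O ×ˢ B.1)
        have h2 := ENNReal.toReal_nonneg (a := (Ψ (s n)) (O ×ˢ B.1))
        linarith
      have hbd : IsBoundedUnder (· ≥ ·) atTop (fun n => ⨅ B : {B : Set S2 // MeasurableSet B},
          (((Ψ (s n)) (O ×ˢ B.1)).toReal - ((Ψ t) (O ×ˢ B.1)).toReal)) :=
        isBoundedUnder_of ⟨-1, fun n => le_ciInf (hlbd n)⟩
      have hev : ∀ᶠ n in atTop, -ε < ⨅ B : {B : Set S2 // MeasurableSet B},
          (((Ψ (s n)) (O ×ˢ B.1)).toReal - ((Ψ t) (O ×ˢ B.1)).toReal) :=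
        eventually_lt_of_lt_liminf (lt_of_lt_of_le (by linarith) h0) hbd
      filter_upwards [hev] with n hn B hB
      have hle : (⨅ B : {B : Set S2 // MeasurableSet B},
            (((Ψ (s n)) (O ×ˢ B.1)).toReal - ((Ψ t) (O ×ˢ B.1)).toReal))
          ≤ ((Ψ (s n)) (O ×ˢ B)).toReal - ((Ψ t) (O ×ˢ B)).toReal :=
        ciInf_le ⟨-1, by rintro x ⟨C, rfl⟩; exact hlbd n C⟩
          (⟨B, hB⟩ : {B : Set S2 // MeasurableSet B})
      linarith
    haveI : ∀ n, IsProbabilityMeasure ((fun n => Ψ (s n)) n) := fun n => inferInstance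
    have hnn : ∀ n, 0 ≤ ⨆ B : {B : Set S2 // MeasurableSet B},
        |(∫ x in Set.univ ×ˢ B.1, f x.1 ∂(Ψ (s n))) - ∫ x in Set.univ ×ˢ B.1, f x.1 ∂(Ψ t)| := by
      intro n
      have h0 : |(∫ x in Set.univ ×ˢ ((∅:Set S2)), f x.1 ∂(Ψ (s n)))
          - ∫ x in Set.univ ×ˢ ((∅:Set S2)), f x.1 ∂(Ψ t)| = 0 := by
        simp [Set.prod_empty]
      have hbdd : BddAbove (Set.range (fun B : {B : Set S2 // MeasurableSet B} =>
          |(∫ x in Set.univ ×ˢ B.1, f x.1 ∂(Ψ (s n))) - ∫ x in Set.univ ×ˢ B.1, f x.1 ∂(Ψ t)|)) := by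
        refine ⟨2 * ‖f‖, ?_⟩
        rintro x ⟨C, rfl⟩
        calc |(∫ x in Set.univ ×ˢ C.1, f x.1 ∂(Ψ (s n))) - ∫ x in Set.univ ×ˢ C.1, f x.1 ∂(Ψ t)|
            ≤ |∫ x in Set.univ ×ˢ C.1, f x.1 ∂(Ψ (s n))|
              + |∫ x in Set.univ ×ˢ C.1, f x.1 ∂(Ψ t)| := abs_sub _ _
          _ ≤ ‖f‖ + ‖f‖ := add_le_add (aux_int_bound _ f _) (aux_int_bound _ f _)
          _ = 2 * ‖f‖ := by ring
      exact le_trans h0.ge (le_ciSup hbdd (⟨∅, MeasurableSet.empty⟩ : {B : Set S2 // MeasurableSet B}))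
    rw [Metric.tendsto_atTop]
    intro ε hε
    have hg := aux_gen (fun n => Ψ (s n)) (Ψ t) H f (half_pos hε)
    obtain ⟨N, hN⟩ := eventually_atTop.1 hg
    refine ⟨N, fun n hn => ?_⟩
    rw [Real.dist_eq, sub_zero, abs_of_nonneg (hnn n)]
    have hsup : (⨆ B : {B : Set S2 // MeasurableSet B},
        |(∫ x in Set.univ ×ˢ B.1, f x.1 ∂(Ψ (s n))) - ∫ x in Set.univ ×ˢ B.1, f x.1 ∂(Ψ t)|) ≤ ε/2 :=
      ciSup_le (fun B => hN n hn B.1 B.2)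
    linarith
end

section
/- A stochastic kernel Ψ on S1×S2 given S3 is semi-uniform Feller if and only if for every sequence s3^(n) converging to s3 in S3 and every closed set C ⊆ S1, lim_{n→∞} sup_{B ∈ B(S2)} ( Ψ(C×B|s3^(n)) − Ψ(C×B|s3) ) = 0. -/
open MeasureTheory ProbabilityTheory Filter Topology

section Staircase

lemma staircase {y δ : ℝ} (hδ : 0 < δ) (h0 : 0 ≤ y) {k : ℕ} (hy : y ≤ k * δ) :
    (∑ i ∈ Finset.Icc 1 k, if (i : ℝ) * δ ≤ y then δ else 0) ≤ y ∧
      y ≤ (∑ i ∈ Finset.Icc 1 k, if (i : ℝ) * δ ≤ y then δ else 0) + δ := by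
  set m := ⌊y / δ⌋₊ with hm
  have key : ∀ i : ℕ, ((i : ℝ) * δ ≤ y ↔ i ≤ m) := by
    intro i
    rw [hm, Nat.le_floor_iff (by positivity), le_div_iff₀ hδ]
  have hfilt : (Finset.Icc 1 k).filter (fun i : ℕ => (i : ℝ) * δ ≤ y)
      = Finset.Icc 1 (min k m) := by
    ext i
    simp only [Finset.mem_filter, Finset.mem_Icc, key]
    omega
  have hsum : (∑ i ∈ Finset.Icc 1 k, if (i : ℝ) * δ ≤ y then δ else 0)
      = (min k m : ℝ) * δ := by
    rw [← Finset.sum_filter, hfilt, Finset.sum_const, Nat.card_Icc]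
    simp [nsmul_eq_mul]
  rw [hsum]
  constructor
  · calc (min k m : ℝ) * δ ≤ (m : ℝ) * δ := by
          have : (min k m : ℝ) ≤ m := by
            have := min_le_right (k:ℝ) (m:ℝ); simpa using this
          nlinarith
      _ ≤ y := by
          have := Nat.floor_le (show (0:ℝ) ≤ y / δ by positivity)
          rw [← hm] at this
          calc (m : ℝ) * δ ≤ (y / δ) * δ := by nlinarith
            _ = y := by field_simp
  · rcases le_or_gt k m with h | h
    · have hk : min (k:ℝ) (m:ℝ) = k := min_eq_left (by exact_mod_cast h)
      rw [hk]; nlinarith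
    · have hmin : min (k:ℝ) (m:ℝ) = m := min_eq_right (by exact_mod_cast h.le)
      rw [hmin]
      have h1 := Nat.lt_floor_add_one (y / δ)
      rw [← hm] at h1
      have h2 : y < ((m : ℝ) + 1) * δ := by
        rw [← div_lt_iff₀ hδ]; linarith
      nlinarith

lemma tendsto_zero_of_eventually_le {u : ℕ → ℝ} (h0 : ∀ n, 0 ≤ u n)
    (h : ∀ ε > (0:ℝ), ∀ᶠ n in atTop, u n ≤ ε) : Tendsto u atTop (𝓝 0) := by
  rw [NormedAddCommGroup.tendsto_nhds_zero]
  intro ε hε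
  filter_upwards [h (ε/2) (by linarith)] with n hn
  rw [Real.norm_eq_abs, abs_of_nonneg (h0 n)]
  linarith

end Staircase

section Aux

variable {X Y : Type*} [MetricSpace X] [SecondCountableTopology X]
  [MeasurableSpace X] [BorelSpace X]
  [MetricSpace Y] [SecondCountableTopology Y]
  [MeasurableSpace Y] [BorelSpace Y]

lemma integrable_comp_fst (f : BoundedContinuousFunction X ℝ) (μ : Measure (X × Y))
    [IsFiniteMeasure μ] : Integrable (fun p : X × Y => f p.1) μ := by
  have := (f.compContinuous (⟨Prod.fst, continuous_fst⟩ : C(X × Y, X))).integrable μ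
  exact this

omit [MetricSpace X] [SecondCountableTopology X] [BorelSpace X]
  [MetricSpace Y] [SecondCountableTopology Y] [BorelSpace Y] in
lemma toReal_measure_le_one (μ : Measure (X × Y)) [IsProbabilityMeasure μ] (s : Set (X × Y)) :
    (μ s).toReal ≤ 1 := by
  have h1 : μ s ≤ 1 := prob_le_one
  have := ENNReal.toReal_mono (by simp) h1
  simpa using this

lemma abs_setIntegral_le (μ : Measure (X × Y)) [IsProbabilityMeasure μ]
    (f : BoundedContinuousFunction X ℝ) (B : Set Y) :
    |∫ x in Set.univ ×ˢ B, f x.1 ∂μ| ≤ ‖f‖ := by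
  have h := norm_integral_le_of_norm_le_const (μ := μ.restrict (Set.univ ×ˢ B))
    (f := fun p : X × Y => f p.1) (C := ‖f‖)
    (ae_of_all _ fun p => f.norm_coe_le_norm p.1)
  rw [Real.norm_eq_abs] at h
  refine h.trans ?_
  have : (μ.restrict (Set.univ ×ˢ B) Set.univ).toReal ≤ 1 := by
    rw [Measure.restrict_apply_univ]
    exact toReal_measure_le_one μ _
  rw [measureReal_def]
  nlinarith [norm_nonneg f]

lemma sandwich (μ : Measure (X × Y)) [IsProbabilityMeasure μ]
    (g : BoundedContinuousFunction X ℝ) (hg : ∀ x, 0 ≤ g x) {δ : ℝ} (hδ : 0 < δ) {k : ℕ}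
    (hk : ‖g‖ ≤ k * δ) {B : Set Y} (hB : MeasurableSet B) :
    δ * (∑ i ∈ Finset.Icc 1 k, (μ ({x | (i : ℝ) * δ ≤ g x} ×ˢ B)).toReal)
      ≤ ∫ x in Set.univ ×ˢ B, g x.1 ∂μ ∧
    ∫ x in Set.univ ×ˢ B, g x.1 ∂μ
      ≤ δ * (∑ i ∈ Finset.Icc 1 k, (μ ({x | (i : ℝ) * δ ≤ g x} ×ˢ B)).toReal) + δ := by
  set ν := μ.restrict (Set.univ ×ˢ B) with hν
  have hνfin : IsFiniteMeasure ν := by rw [hν]; infer_instance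
  have hCmeas : ∀ i : ℕ, MeasurableSet {x : X | (i : ℝ) * δ ≤ g x} :=
    fun i => (isClosed_le continuous_const g.continuous).measurableSet
  set s : ℕ → Set (X × Y) := fun i => {p : X × Y | (i : ℝ) * δ ≤ g p.1} with hs
  have hsmeas : ∀ i, MeasurableSet (s i) := fun i => (hCmeas i).preimage measurable_fst
  have hνs : ∀ i, ν (s i) = μ ({x | (i : ℝ) * δ ≤ g x} ×ˢ B) := by
    intro i
    rw [hν, Measure.restrict_apply (hsmeas i)]
    congr 1
    ext p
    simp [hs, Set.mem_prod]
  set F : X × Y → ℝ := fun p => ∑ i ∈ Finset.Icc 1 k, (s i).indicator (fun _ => δ) p with hF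
  have hFint : Integrable F ν := by
    apply integrable_finset_sum
    intro i _
    exact (integrable_const δ).indicator (hsmeas i)
  have hFeval : ∫ p, F p ∂ν = ∑ i ∈ Finset.Icc 1 k, δ * (ν (s i)).toReal := by
    rw [hF, integral_finset_sum _ (fun i _ => (integrable_const δ).indicator (hsmeas i))]
    refine Finset.sum_congr rfl fun i _ => ?_
    rw [integral_indicator_const _ (hsmeas i)]
    simp [mul_comm, measureReal_def]
  have hgint : Integrable (fun p : X × Y => g p.1) ν := integrable_comp_fst g ν
  have hptwise : ∀ p : X × Y, F p ≤ g p.1 ∧ g p.1 ≤ F p + δ := by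
    intro p
    have h0 : 0 ≤ g p.1 := hg _
    have hy : g p.1 ≤ k * δ := le_trans (by
      have := g.norm_coe_le_norm p.1
      rw [Real.norm_eq_abs] at this
      linarith [abs_le.mp this]) hk
    have hst := staircase hδ h0 hy
    have hFeq : F p = ∑ i ∈ Finset.Icc 1 k, if (i : ℝ) * δ ≤ g p.1 then δ else 0 := by
      rw [hF]
      refine Finset.sum_congr rfl fun i _ => ?_
      simp [hs, Set.indicator_apply]
    rw [hFeq]
    exact hst
  constructor
  · have h1 : ∫ p, F p ∂ν ≤ ∫ p : X × Y, g p.1 ∂ν :=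
      integral_mono hFint hgint fun p => (hptwise p).1
    rw [hFeval] at h1
    calc δ * (∑ i ∈ Finset.Icc 1 k, (μ ({x | (i : ℝ) * δ ≤ g x} ×ˢ B)).toReal)
        = ∑ i ∈ Finset.Icc 1 k, δ * (ν (s i)).toReal := by
          rw [Finset.mul_sum]; exact Finset.sum_congr rfl fun i _ => by rw [hνs]
      _ ≤ _ := h1
  · have h2 : ∫ p : X × Y, g p.1 ∂ν ≤ ∫ p, (F p + δ) ∂ν :=
      integral_mono hgint (hFint.add (integrable_const δ)) fun p => (hptwise p).2
    rw [integral_add hFint (integrable_const δ), hFeval, integral_const] at h2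
    have hν1 : (ν Set.univ).toReal ≤ 1 := by
      rw [hν, Measure.restrict_apply_univ]
      exact toReal_measure_le_one μ _
    calc ∫ p : X × Y, g p.1 ∂ν ≤ (∑ i ∈ Finset.Icc 1 k, δ * (ν (s i)).toReal)
          + (ν Set.univ).toReal • δ := h2
      _ ≤ δ * (∑ i ∈ Finset.Icc 1 k, (μ ({x | (i : ℝ) * δ ≤ g x} ×ˢ B)).toReal) + δ := by
          have he : (∑ i ∈ Finset.Icc 1 k, δ * (ν (s i)).toReal)
              = δ * (∑ i ∈ Finset.Icc 1 k, (μ ({x | (i : ℝ) * δ ≤ g x} ×ˢ B)).toReal) := by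
            rw [Finset.mul_sum]; exact Finset.sum_congr rfl fun i _ => by rw [hνs]
          rw [he, smul_eq_mul]
          have : (ν Set.univ).toReal * δ ≤ 1 * δ := by nlinarith
          linarith

end Aux
section Aux2

variable {X Y : Type*} [MetricSpace X] [SecondCountableTopology X]
  [MeasurableSpace X] [BorelSpace X]
  [MetricSpace Y] [SecondCountableTopology Y]
  [MeasurableSpace Y] [BorelSpace Y]

/-- Continuous approximation of the indicator of a closed set from above. -/
noncomputable def auxFun (C : Set X) (k : ℕ) : BoundedContinuousFunction X ℝ :=
  BoundedContinuousFunction.mkOfBound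
    ⟨fun x => max 0 (1 - ((k : ℝ) + 1) * Metric.infDist x C), by
      exact continuous_const.max
        (continuous_const.sub (continuous_const.mul (Metric.continuous_infDist_pt C)))⟩
    1 (by
      intro x y
      have hx0 : (0:ℝ) ≤ max 0 (1 - ((k : ℝ) + 1) * Metric.infDist x C) := le_max_left _ _
      have hy0 : (0:ℝ) ≤ max 0 (1 - ((k : ℝ) + 1) * Metric.infDist y C) := le_max_left _ _
      have hx1 : max 0 (1 - ((k : ℝ) + 1) * Metric.infDist x C) ≤ 1 :=
        max_le zero_le_one (by nlinarith [Metric.infDist_nonneg (x := x) (s := C)])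
      have hy1 : max 0 (1 - ((k : ℝ) + 1) * Metric.infDist y C) ≤ 1 :=
        max_le zero_le_one (by nlinarith [Metric.infDist_nonneg (x := y) (s := C)])
      rw [Real.dist_eq, abs_sub_le_iff]
      constructor <;> simp only [ContinuousMap.coe_mk] <;> linarith)

lemma auxFun_apply (C : Set X) (k : ℕ) (x : X) :
    auxFun C k x = max 0 (1 - ((k : ℝ) + 1) * Metric.infDist x C) := rfl

lemma auxFun_nonneg (C : Set X) (k : ℕ) (x : X) : 0 ≤ auxFun C k x := le_max_left _ _

lemma auxFun_le_one (C : Set X) (k : ℕ) (x : X) : auxFun C k x ≤ 1 := by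
  rw [auxFun_apply]
  exact max_le zero_le_one (by nlinarith [Metric.infDist_nonneg (x := x) (s := C)])

lemma indicator_le_auxFun (C : Set X) (k : ℕ) (x : X) :
    Set.indicator C (fun _ => (1:ℝ)) x ≤ auxFun C k x := by
  by_cases hx : x ∈ C
  · rw [Set.indicator_of_mem hx, auxFun_apply, Metric.infDist_zero_of_mem hx]
    simp
  · rw [Set.indicator_of_notMem hx]
    exact auxFun_nonneg C k x

lemma auxFun_tendsto (C : Set X) (hC : IsClosed C) (hCne : C.Nonempty) (x : X) :
    Tendsto (fun k => auxFun C k x) atTop (𝓝 (Set.indicator C (fun _ => (1:ℝ)) x)) := by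
  by_cases hx : x ∈ C
  · rw [Set.indicator_of_mem hx]
    have : ∀ k, auxFun C k x = 1 := by
      intro k
      rw [auxFun_apply, Metric.infDist_zero_of_mem hx]
      simp
    simpa [this] using tendsto_const_nhds (x := (1:ℝ)) (f := atTop (α := ℕ))
  · rw [Set.indicator_of_notMem hx]
    have hd : 0 < Metric.infDist x C := (hC.notMem_iff_infDist_pos hCne).1 hx
    have hev : ∀ᶠ k : ℕ in atTop, auxFun C k x = 0 := by
      filter_upwards [eventually_ge_atTop ⌈1 / Metric.infDist x C⌉₊] with k hk
      rw [auxFun_apply, max_eq_left]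
      have h1 : 1 / Metric.infDist x C ≤ (k : ℝ) := le_trans (Nat.le_ceil _) (by exact_mod_cast hk)
      have h2 : 1 ≤ (k : ℝ) * Metric.infDist x C := by
        rw [div_le_iff₀ hd] at h1; linarith
      nlinarith
    exact Tendsto.congr' (Filter.EventuallyEq.symm hev) tendsto_const_nhds

lemma integral_indicator_fst (μ : Measure (X × Y)) [IsFiniteMeasure μ]
    {C : Set X} (hC : MeasurableSet C) {B : Set Y} (hB : MeasurableSet B) :
    ∫ p in Set.univ ×ˢ B, Set.indicator C (fun _ => (1:ℝ)) p.1 ∂μ = (μ (C ×ˢ B)).toReal := by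
  have hfst : MeasurableSet (Prod.fst ⁻¹' C : Set (X × Y)) := hC.preimage measurable_fst
  have heq : (fun p : X × Y => Set.indicator C (fun _ => (1:ℝ)) p.1)
      = Set.indicator (Prod.fst ⁻¹' C) (fun _ => (1:ℝ)) := by
    ext p
    by_cases hp : p.1 ∈ C <;> simp [Set.indicator_apply, hp]
  rw [heq, integral_indicator_const _ hfst, measureReal_def, Measure.restrict_apply hfst]
  have : (Prod.fst ⁻¹' C : Set (X × Y)) ∩ Set.univ ×ˢ B = C ×ˢ B := by
    ext p; simp [Set.mem_prod]
  rw [this]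
  simp

lemma integrable_indicator_fst (μ : Measure (X × Y)) [IsFiniteMeasure μ]
    {C : Set X} (hC : MeasurableSet C) :
    Integrable (fun p : X × Y => Set.indicator C (fun _ => (1:ℝ)) p.1) μ := by
  have hfst : MeasurableSet (Prod.fst ⁻¹' C : Set (X × Y)) := hC.preimage measurable_fst
  have heq : (fun p : X × Y => Set.indicator C (fun _ => (1:ℝ)) p.1)
      = Set.indicator (Prod.fst ⁻¹' C) (fun _ => (1:ℝ)) := by
    ext p
    by_cases hp : p.1 ∈ C <;> simp [Set.indicator_apply, hp]
  rw [heq]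
  exact (integrable_const (1:ℝ)).indicator hfst

end Aux2
section Directions

variable {X Y : Type*} [MetricSpace X] [SecondCountableTopology X]
  [MeasurableSpace X] [BorelSpace X]
  [MetricSpace Y] [SecondCountableTopology Y]
  [MeasurableSpace Y] [BorelSpace Y]

lemma bddAbove_E (μ' μ : Measure (X × Y)) [IsProbabilityMeasure μ'] [IsProbabilityMeasure μ]
    (C : Set X) :
    BddAbove (Set.range fun B : {B : Set Y // MeasurableSet B} =>
      ((μ' (C ×ˢ B.1)).toReal - (μ (C ×ˢ B.1)).toReal)) := by
  refine ⟨1, ?_⟩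
  rintro x ⟨B, rfl⟩
  have h1 := toReal_measure_le_one μ' (C ×ˢ B.1)
  have h2 : 0 ≤ (μ (C ×ˢ B.1)).toReal := ENNReal.toReal_nonneg
  dsimp only
  linarith

lemma bddAbove_D (μ' μ : Measure (X × Y)) [IsProbabilityMeasure μ'] [IsProbabilityMeasure μ]
    (f : BoundedContinuousFunction X ℝ) :
    BddAbove (Set.range fun B : {B : Set Y // MeasurableSet B} =>
      |(∫ x in Set.univ ×ˢ B.1, f x.1 ∂μ') - ∫ x in Set.univ ×ˢ B.1, f x.1 ∂μ|) := by
  refine ⟨2 * ‖f‖, ?_⟩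
  rintro x ⟨B, rfl⟩
  have h1 := abs_setIntegral_le μ' f B.1
  have h2 := abs_setIntegral_le μ f B.1
  dsimp only
  calc |(∫ x in Set.univ ×ˢ B.1, f x.1 ∂μ') - ∫ x in Set.univ ×ˢ B.1, f x.1 ∂μ|
      ≤ |∫ x in Set.univ ×ˢ B.1, f x.1 ∂μ'| + |∫ x in Set.univ ×ˢ B.1, f x.1 ∂μ| := abs_sub _ _
    _ ≤ 2 * ‖f‖ := by linarith

lemma E_nonneg (μ' μ : Measure (X × Y)) [IsProbabilityMeasure μ'] [IsProbabilityMeasure μ]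
    (C : Set X) :
    0 ≤ ⨆ B : {B : Set Y // MeasurableSet B},
      ((μ' (C ×ˢ B.1)).toReal - (μ (C ×ˢ B.1)).toReal) := by
  have := le_ciSup (bddAbove_E μ' μ C) (⟨∅, MeasurableSet.empty⟩ : {B : Set Y // MeasurableSet B})
  simpa using this

lemma D_nonneg (μ' μ : Measure (X × Y)) [IsProbabilityMeasure μ'] [IsProbabilityMeasure μ]
    (f : BoundedContinuousFunction X ℝ) :
    0 ≤ ⨆ B : {B : Set Y // MeasurableSet B},
      |(∫ x in Set.univ ×ˢ B.1, f x.1 ∂μ') - ∫ x in Set.univ ×ˢ B.1, f x.1 ∂μ| := by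
  have := le_ciSup (bddAbove_D μ' μ f) (⟨∅, MeasurableSet.empty⟩ : {B : Set Y // MeasurableSet B})
  refine le_trans ?_ this
  positivity

/-- The forward direction. -/
lemma closed_of_SUF (μseq : ℕ → Measure (X × Y)) (μ : Measure (X × Y))
    [hPn : ∀ n, IsProbabilityMeasure (μseq n)] [IsProbabilityMeasure μ]
    (hSUF : ∀ f : BoundedContinuousFunction X ℝ,
      Tendsto (fun n => ⨆ B : {B : Set Y // MeasurableSet B},
        |(∫ x in Set.univ ×ˢ B.1, f x.1 ∂(μseq n)) - ∫ x in Set.univ ×ˢ B.1, f x.1 ∂μ|)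
        atTop (𝓝 0))
    (C : Set X) (hC : IsClosed C) :
    Tendsto (fun n => ⨆ B : {B : Set Y // MeasurableSet B},
      ((μseq n (C ×ˢ B.1)).toReal - (μ (C ×ˢ B.1)).toReal)) atTop (𝓝 0) := by
  haveI hne : Nonempty {B : Set Y // MeasurableSet B} := ⟨⟨∅, MeasurableSet.empty⟩⟩
  rcases Set.eq_empty_or_nonempty C with rfl | hCne
  · have hzero : ∀ n, (⨆ B : {B : Set Y // MeasurableSet B},
        ((μseq n (∅ ×ˢ B.1)).toReal - (μ (∅ ×ˢ B.1)).toReal)) = 0 := by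
      intro n
      have : ∀ B : {B : Set Y // MeasurableSet B},
          ((μseq n (∅ ×ˢ B.1)).toReal - (μ (∅ ×ˢ B.1)).toReal) = 0 := by
        intro B; simp
      rw [funext this]
      exact ciSup_const
    simpa [funext hzero] using tendsto_const_nhds (x := (0:ℝ)) (f := atTop (α := ℕ))
  have hCmeas : MeasurableSet C := hC.measurableSet
  -- the deficiency δk
  set δk : ℕ → ℝ := fun k => (∫ p : X × Y, (auxFun C k) p.1 ∂μ) - (μ (C ×ˢ Set.univ)).toReal
    with hδk
  have hδtend : Tendsto δk atTop (𝓝 0) := by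
    have h1 : Tendsto (fun k => ∫ p : X × Y, (auxFun C k) p.1 ∂μ) atTop
        (𝓝 (∫ p : X × Y, Set.indicator C (fun _ => (1:ℝ)) p.1 ∂μ)) := by
      apply tendsto_integral_of_dominated_convergence (bound := fun _ => (1:ℝ))
      · intro k
        exact ((auxFun C k).continuous.comp continuous_fst).aestronglyMeasurable
      · exact integrable_const 1
      · intro k
        refine ae_of_all _ fun p => ?_
        rw [Real.norm_eq_abs, abs_of_nonneg (auxFun_nonneg C k p.1)]
        exact auxFun_le_one C k p.1
      · exact ae_of_all _ fun p => auxFun_tendsto C hC hCne p.1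
    have h2 : ∫ p : X × Y, Set.indicator C (fun _ => (1:ℝ)) p.1 ∂μ
        = (μ (C ×ˢ Set.univ)).toReal := by
      have h := integral_indicator_fst μ hCmeas (MeasurableSet.univ (α := Y))
      rw [Set.univ_prod_univ, Measure.restrict_univ] at h
      exact h
    rw [hδk]
    have := h1.sub (tendsto_const_nhds (x := (μ (C ×ˢ Set.univ)).toReal) (f := atTop (α := ℕ)))
    rw [h2] at this
    simpa using this
  -- key estimate
  have hkey : ∀ k n, (⨆ B : {B : Set Y // MeasurableSet B},
      ((μseq n (C ×ˢ B.1)).toReal - (μ (C ×ˢ B.1)).toReal))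
      ≤ (⨆ B : {B : Set Y // MeasurableSet B},
        |(∫ x in Set.univ ×ˢ B.1, (auxFun C k) x.1 ∂(μseq n))
          - ∫ x in Set.univ ×ˢ B.1, (auxFun C k) x.1 ∂μ|) + δk k := by
    intro k n
    refine ciSup_le fun B => ?_
    have hB := B.2
    -- step a
    have ha : (μseq n (C ×ˢ B.1)).toReal ≤ ∫ x in Set.univ ×ˢ B.1, (auxFun C k) x.1 ∂(μseq n) := by
      rw [← integral_indicator_fst (μseq n) hCmeas hB]
      exact integral_mono (integrable_indicator_fst _ hCmeas)
        (integrable_comp_fst _ _) (fun p => indicator_le_auxFun C k p.1)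
    -- step b
    have hb : ∫ x in Set.univ ×ˢ B.1, (auxFun C k) x.1 ∂(μseq n)
        ≤ ∫ x in Set.univ ×ˢ B.1, (auxFun C k) x.1 ∂μ
          + (⨆ B : {B : Set Y // MeasurableSet B},
            |(∫ x in Set.univ ×ˢ B.1, (auxFun C k) x.1 ∂(μseq n))
              - ∫ x in Set.univ ×ˢ B.1, (auxFun C k) x.1 ∂μ|) := by
      have := le_ciSup (bddAbove_D (μseq n) μ (auxFun C k)) B
      have habs : (∫ x in Set.univ ×ˢ B.1, (auxFun C k) x.1 ∂(μseq n))
          - ∫ x in Set.univ ×ˢ B.1, (auxFun C k) x.1 ∂μ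
          ≤ |(∫ x in Set.univ ×ˢ B.1, (auxFun C k) x.1 ∂(μseq n))
            - ∫ x in Set.univ ×ˢ B.1, (auxFun C k) x.1 ∂μ| := le_abs_self _
      linarith
    -- step c
    have hc : ∫ x in Set.univ ×ˢ B.1, (auxFun C k) x.1 ∂μ ≤ (μ (C ×ˢ B.1)).toReal + δk k := by
      have hsub : ∫ x in Set.univ ×ˢ B.1, (auxFun C k) x.1 ∂μ - (μ (C ×ˢ B.1)).toReal
          = ∫ p in Set.univ ×ˢ B.1,
              ((auxFun C k) p.1 - Set.indicator C (fun _ => (1:ℝ)) p.1) ∂μ := by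
        rw [integral_sub (integrable_comp_fst _ _) (integrable_indicator_fst _ hCmeas),
          integral_indicator_fst μ hCmeas hB]
      have hle : ∫ p in Set.univ ×ˢ B.1,
            ((auxFun C k) p.1 - Set.indicator C (fun _ => (1:ℝ)) p.1) ∂μ
          ≤ ∫ p : X × Y, ((auxFun C k) p.1 - Set.indicator C (fun _ => (1:ℝ)) p.1) ∂μ := by
        apply setIntegral_le_integral
        · exact (integrable_comp_fst _ _).sub (integrable_indicator_fst _ hCmeas)
        · exact ae_of_all _ fun p => by
            have := indicator_le_auxFun C k p.1
            simp only [Pi.zero_apply]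
            linarith
      have heval : ∫ p : X × Y, ((auxFun C k) p.1 - Set.indicator C (fun _ => (1:ℝ)) p.1) ∂μ
          = δk k := by
        rw [integral_sub (integrable_comp_fst _ _) (integrable_indicator_fst _ hCmeas), hδk]
        have h := integral_indicator_fst μ hCmeas (MeasurableSet.univ (α := Y))
        rw [Set.univ_prod_univ, Measure.restrict_univ] at h
        rw [h]
      linarith
    linarith
  -- conclude
  apply tendsto_zero_of_eventually_le
  · intro n; exact E_nonneg (μseq n) μ C
  intro ε hε
  obtain ⟨k, hk⟩ : ∃ k, |δk k| < ε / 2 := by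
    have := (NormedAddCommGroup.tendsto_nhds_zero.1 hδtend) (ε/2) (by linarith)
    rcases this.exists with ⟨k, hk⟩
    exact ⟨k, by simpa using hk⟩
  have hD := (NormedAddCommGroup.tendsto_nhds_zero.1 (hSUF (auxFun C k))) (ε/2) (by linarith)
  filter_upwards [hD] with n hn
  have hDn : (⨆ B : {B : Set Y // MeasurableSet B},
      |(∫ x in Set.univ ×ˢ B.1, (auxFun C k) x.1 ∂(μseq n))
        - ∫ x in Set.univ ×ˢ B.1, (auxFun C k) x.1 ∂μ|) ≤ ε/2 := by
    rw [Real.norm_eq_abs] at hn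
    have h0 := D_nonneg (μseq n) μ (auxFun C k)
    rw [abs_of_nonneg h0] at hn
    linarith
  have habs := abs_lt.1 hk
  exact le_trans (hkey k n) (le_trans (add_le_add hDn habs.2.le) (by linarith))

end Directions
section Backward

variable {X Y : Type*} [MetricSpace X] [SecondCountableTopology X]
  [MeasurableSpace X] [BorelSpace X]
  [MetricSpace Y] [SecondCountableTopology Y]
  [MeasurableSpace Y] [BorelSpace Y]

omit [MetricSpace X] [SecondCountableTopology X] [BorelSpace X]
  [MetricSpace Y] [SecondCountableTopology Y] [BorelSpace Y] in
lemma compl_toReal (μ' : Measure (X × Y)) [IsProbabilityMeasure μ'] {B : Set Y}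
    (hB : MeasurableSet B) :
    (μ' (Set.univ ×ˢ Bᶜ)).toReal = 1 - (μ' (Set.univ ×ˢ B)).toReal := by
  have hset : (Set.univ ×ˢ Bᶜ : Set (X × Y)) = (Set.univ ×ˢ B)ᶜ := by ext p; simp
  rw [hset, prob_compl_eq_one_sub (MeasurableSet.univ.prod hB),
    ENNReal.toReal_sub_of_le prob_le_one (by simp)]
  simp

lemma one_sided (μseq : ℕ → Measure (X × Y)) (μ : Measure (X × Y))
    [hPn : ∀ n, IsProbabilityMeasure (μseq n)] [IsProbabilityMeasure μ]
    (hcl : ∀ C : Set X, IsClosed C →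
      Tendsto (fun n => ⨆ B : {B : Set Y // MeasurableSet B},
        ((μseq n (C ×ˢ B.1)).toReal - (μ (C ×ˢ B.1)).toReal)) atTop (𝓝 0))
    (g : BoundedContinuousFunction X ℝ) (hg : ∀ x, 0 ≤ g x) {ε : ℝ} (hε : 0 < ε) :
    ∀ᶠ n in atTop, ∀ B : Set Y, MeasurableSet B →
      (∫ x in Set.univ ×ˢ B, g x.1 ∂(μseq n)) - ∫ x in Set.univ ×ˢ B, g x.1 ∂μ ≤ ε := by
  have hδ : 0 < ε/2 := by positivity
  set k := max 1 ⌈‖g‖/(ε/2)⌉₊ with hkdef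
  have hk1 : 1 ≤ k := le_max_left _ _
  have hkpos : (0:ℝ) < k := by exact_mod_cast lt_of_lt_of_le one_pos hk1
  have hgk : ‖g‖ ≤ k * (ε/2) := by
    have h1 : ‖g‖/(ε/2) ≤ (⌈‖g‖/(ε/2)⌉₊ : ℝ) := Nat.le_ceil _
    have h2 : ((⌈‖g‖/(ε/2)⌉₊ : ℕ) : ℝ) ≤ (k : ℝ) := by exact_mod_cast le_max_right 1 _
    rw [div_le_iff₀ hδ] at h1
    nlinarith
  set τ := ε/(2*k*(ε/2)) with hτdef
  have hτpos : 0 < τ := by positivity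
  have hev : ∀ᶠ n in atTop, ∀ i ∈ Finset.Icc 1 k,
      (⨆ B : {B : Set Y // MeasurableSet B},
        ((μseq n ({x | (i:ℝ)*(ε/2) ≤ g x} ×ˢ B.1)).toReal
          - (μ ({x | (i:ℝ)*(ε/2) ≤ g x} ×ˢ B.1)).toReal)) ≤ τ := by
    rw [Finset.eventually_all]
    intro i _
    have hclosed : IsClosed {x : X | (i:ℝ)*(ε/2) ≤ g x} :=
      isClosed_le continuous_const g.continuous
    have := (NormedAddCommGroup.tendsto_nhds_zero.1 (hcl _ hclosed)) τ hτpos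
    filter_upwards [this] with n hn
    rw [Real.norm_eq_abs] at hn
    exact (le_abs_self _).trans hn.le
  filter_upwards [hev] with n hn B hB
  haveI := hPn n
  have hs1 := (sandwich (μseq n) g hg hδ hgk hB).2
  have hs2 := (sandwich μ g hg hδ hgk hB).1
  have hsum : (∑ i ∈ Finset.Icc 1 k, ((μseq n ({x | (i:ℝ)*(ε/2) ≤ g x} ×ˢ B)).toReal
      - (μ ({x | (i:ℝ)*(ε/2) ≤ g x} ×ˢ B)).toReal)) ≤ (k:ℝ) * τ := by
    calc (∑ i ∈ Finset.Icc 1 k, ((μseq n ({x | (i:ℝ)*(ε/2) ≤ g x} ×ˢ B)).toReal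
          - (μ ({x | (i:ℝ)*(ε/2) ≤ g x} ×ˢ B)).toReal))
        ≤ ∑ i ∈ Finset.Icc 1 k, (⨆ B' : {B : Set Y // MeasurableSet B},
            ((μseq n ({x | (i:ℝ)*(ε/2) ≤ g x} ×ˢ B'.1)).toReal
              - (μ ({x | (i:ℝ)*(ε/2) ≤ g x} ×ˢ B'.1)).toReal)) := by
          refine Finset.sum_le_sum fun i _ => ?_
          exact le_ciSup (bddAbove_E (μseq n) μ _) (⟨B, hB⟩ : {B : Set Y // MeasurableSet B})
      _ ≤ ∑ i ∈ Finset.Icc 1 k, τ := Finset.sum_le_sum fun i hi => hn i hi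
      _ = (k:ℝ) * τ := by
          rw [Finset.sum_const, Nat.card_Icc]
          simp [nsmul_eq_mul]
  have hdist : (ε/2) * (∑ i ∈ Finset.Icc 1 k,
        (μseq n ({x | (i:ℝ)*(ε/2) ≤ g x} ×ˢ B)).toReal)
      - (ε/2) * (∑ i ∈ Finset.Icc 1 k, (μ ({x | (i:ℝ)*(ε/2) ≤ g x} ×ˢ B)).toReal)
      = (ε/2) * (∑ i ∈ Finset.Icc 1 k, ((μseq n ({x | (i:ℝ)*(ε/2) ≤ g x} ×ˢ B)).toReal
        - (μ ({x | (i:ℝ)*(ε/2) ≤ g x} ×ˢ B)).toReal)) := by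
    rw [← mul_sub, Finset.sum_sub_distrib]
  have hmul : (ε/2) * (∑ i ∈ Finset.Icc 1 k, ((μseq n ({x | (i:ℝ)*(ε/2) ≤ g x} ×ˢ B)).toReal
      - (μ ({x | (i:ℝ)*(ε/2) ≤ g x} ×ˢ B)).toReal)) ≤ (ε/2) * ((k:ℝ) * τ) :=
    mul_le_mul_of_nonneg_left hsum hδ.le
  have hfin : (ε/2) * ((k:ℝ) * τ) = ε/2 := by
    rw [hτdef]
    field_simp
  linarith

lemma SUF_of_closed (μseq : ℕ → Measure (X × Y)) (μ : Measure (X × Y))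
    [hPn : ∀ n, IsProbabilityMeasure (μseq n)] [IsProbabilityMeasure μ]
    (hcl : ∀ C : Set X, IsClosed C →
      Tendsto (fun n => ⨆ B : {B : Set Y // MeasurableSet B},
        ((μseq n (C ×ˢ B.1)).toReal - (μ (C ×ˢ B.1)).toReal)) atTop (𝓝 0))
    (f : BoundedContinuousFunction X ℝ) :
    Tendsto (fun n => ⨆ B : {B : Set Y // MeasurableSet B},
      |(∫ x in Set.univ ×ˢ B.1, f x.1 ∂(μseq n)) - ∫ x in Set.univ ×ˢ B.1, f x.1 ∂μ|)
      atTop (𝓝 0) := by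
  haveI hne : Nonempty {B : Set Y // MeasurableSet B} := ⟨⟨∅, MeasurableSet.empty⟩⟩
  apply tendsto_zero_of_eventually_le
  · intro n
    exact D_nonneg (μseq n) μ f
  intro ε hε
  set G1 : BoundedContinuousFunction X ℝ := f + BoundedContinuousFunction.const X ‖f‖ with hG1
  set G2 : BoundedContinuousFunction X ℝ := BoundedContinuousFunction.const X ‖f‖ - f with hG2
  have hG1app : ∀ x, G1 x = f x + ‖f‖ := fun x => by
    rw [hG1, BoundedContinuousFunction.add_apply]
    simp
  have hG2app : ∀ x, G2 x = ‖f‖ - f x := fun x => by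
    rw [hG2, BoundedContinuousFunction.sub_apply]
    simp
  have hfx : ∀ x, |f x| ≤ ‖f‖ := fun x => by
    have := f.norm_coe_le_norm x
    rwa [Real.norm_eq_abs] at this
  have hg1 : ∀ x, 0 ≤ G1 x := fun x => by
    rw [hG1app]
    linarith [abs_le.1 (hfx x)]
  have hg2 : ∀ x, 0 ≤ G2 x := fun x => by
    rw [hG2app]
    linarith [abs_le.1 (hfx x)]
  have h1 := one_sided μseq μ hcl G1 hg1 (show (0:ℝ) < ε/2 by positivity)
  have h2 := one_sided μseq μ hcl G2 hg2 (show (0:ℝ) < ε/2 by positivity)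
  have hη : (0:ℝ) < ε/(2*(‖f‖+1)) := by positivity
  have he : ∀ᶠ n in atTop, (⨆ B : {B : Set Y // MeasurableSet B},
      ((μseq n (Set.univ ×ˢ B.1)).toReal - (μ (Set.univ ×ˢ B.1)).toReal))
      ≤ ε/(2*(‖f‖+1)) := by
    have := (NormedAddCommGroup.tendsto_nhds_zero.1 (hcl Set.univ isClosed_univ)) _ hη
    filter_upwards [this] with n hn
    rw [Real.norm_eq_abs] at hn
    exact (le_abs_self _).trans hn.le
  filter_upwards [h1, h2, he] with n hn1 hn2 hne2
  refine ciSup_le fun B => ?_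
  haveI := hPn n
  -- bound on |Δ|
  have hΔ1 : (μseq n (Set.univ ×ˢ B.1)).toReal - (μ (Set.univ ×ˢ B.1)).toReal
      ≤ ε/(2*(‖f‖+1)) :=
    le_trans (le_ciSup (bddAbove_E (μseq n) μ Set.univ) B) hne2
  have hΔ2 : -((μseq n (Set.univ ×ˢ B.1)).toReal - (μ (Set.univ ×ˢ B.1)).toReal)
      ≤ ε/(2*(‖f‖+1)) := by
    have hBc : ((μseq n (Set.univ ×ˢ B.1ᶜ)).toReal - (μ (Set.univ ×ˢ B.1ᶜ)).toReal)
        ≤ ε/(2*(‖f‖+1)) :=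
      le_trans (le_ciSup (bddAbove_E (μseq n) μ Set.univ)
        (⟨B.1ᶜ, B.2.compl⟩ : {B : Set Y // MeasurableSet B})) hne2
    rw [compl_toReal (μseq n) B.2, compl_toReal μ B.2] at hBc
    linarith
  have habsΔ : |(μseq n (Set.univ ×ˢ B.1)).toReal - (μ (Set.univ ×ˢ B.1)).toReal|
      ≤ ε/(2*(‖f‖+1)) := abs_le.2 ⟨by linarith, hΔ1⟩
  have hnormΔ : ‖f‖ * |(μseq n (Set.univ ×ˢ B.1)).toReal - (μ (Set.univ ×ˢ B.1)).toReal|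
      ≤ ε/2 := by
    have h3 : ‖f‖ * |(μseq n (Set.univ ×ˢ B.1)).toReal - (μ (Set.univ ×ˢ B.1)).toReal|
        ≤ ‖f‖ * (ε/(2*(‖f‖+1))) := mul_le_mul_of_nonneg_left habsΔ (norm_nonneg f)
    have h4 : ‖f‖ * (ε/(2*(‖f‖+1))) ≤ ε/2 := by
      have hpos : (0:ℝ) < ‖f‖ + 1 := by positivity
      rw [← mul_div_assoc, div_le_div_iff₀ (by positivity) (by norm_num)]
      nlinarith [norm_nonneg f, mul_nonneg (norm_nonneg f) hε.le]
    linarith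
  -- integral identities
  have hint1 : ∀ (μ' : Measure (X × Y)) [IsProbabilityMeasure μ'],
      (∫ x in Set.univ ×ˢ B.1, G1 x.1 ∂μ')
        = (∫ x in Set.univ ×ˢ B.1, f x.1 ∂μ') + ‖f‖ * (μ' (Set.univ ×ˢ B.1)).toReal := by
    intro μ' _
    calc (∫ x in Set.univ ×ˢ B.1, G1 x.1 ∂μ')
        = ∫ x in Set.univ ×ˢ B.1, (f x.1 + ‖f‖) ∂μ' :=
          integral_congr_ae (ae_of_all _ fun p => by simp only [hG1app])
      _ = (∫ x in Set.univ ×ˢ B.1, f x.1 ∂μ') + ‖f‖ * (μ' (Set.univ ×ˢ B.1)).toReal := by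
          rw [integral_add (integrable_comp_fst f _) (integrable_const _), integral_const,
            measureReal_def, Measure.restrict_apply_univ, smul_eq_mul, mul_comm]
  have hint2 : ∀ (μ' : Measure (X × Y)) [IsProbabilityMeasure μ'],
      (∫ x in Set.univ ×ˢ B.1, G2 x.1 ∂μ')
        = ‖f‖ * (μ' (Set.univ ×ˢ B.1)).toReal - (∫ x in Set.univ ×ˢ B.1, f x.1 ∂μ') := by
    intro μ' _
    calc (∫ x in Set.univ ×ˢ B.1, G2 x.1 ∂μ')
        = ∫ x in Set.univ ×ˢ B.1, (‖f‖ - f x.1) ∂μ' :=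
          integral_congr_ae (ae_of_all _ fun p => by simp only [hG2app])
      _ = ‖f‖ * (μ' (Set.univ ×ˢ B.1)).toReal - (∫ x in Set.univ ×ˢ B.1, f x.1 ∂μ') := by
          rw [integral_sub (integrable_const _) (integrable_comp_fst f _), integral_const,
            measureReal_def, Measure.restrict_apply_univ, smul_eq_mul, mul_comm]
  have hd1 := hn1 B.1 B.2
  have hd2 := hn2 B.1 B.2
  rw [hint1 (μseq n), hint1 μ] at hd1
  rw [hint2 (μseq n), hint2 μ] at hd2
  have hΔab : ‖f‖ * ((μseq n (Set.univ ×ˢ B.1)).toReal) - ‖f‖ * ((μ (Set.univ ×ˢ B.1)).toReal)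
      = ‖f‖ * (((μseq n (Set.univ ×ˢ B.1)).toReal) - ((μ (Set.univ ×ˢ B.1)).toReal)) :=
    (mul_sub _ _ _).symm
  have habs1 : ‖f‖ * (((μseq n (Set.univ ×ˢ B.1)).toReal) - ((μ (Set.univ ×ˢ B.1)).toReal))
      ≤ ‖f‖ * |((μseq n (Set.univ ×ˢ B.1)).toReal) - ((μ (Set.univ ×ˢ B.1)).toReal)| :=
    mul_le_mul_of_nonneg_left (le_abs_self _) (norm_nonneg f)
  have habs2 : -(‖f‖ * (((μseq n (Set.univ ×ˢ B.1)).toReal) - ((μ (Set.univ ×ˢ B.1)).toReal)))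
      ≤ ‖f‖ * |((μseq n (Set.univ ×ˢ B.1)).toReal) - ((μ (Set.univ ×ˢ B.1)).toReal)| := by
    have := mul_le_mul_of_nonneg_left
      (neg_le_abs (((μseq n (Set.univ ×ˢ B.1)).toReal) - ((μ (Set.univ ×ˢ B.1)).toReal)))
      (norm_nonneg f)
    linarith [this]
  rw [abs_le]
  constructor
  · linarith
  · linarith

end Backward
/-- A stochastic kernel `Ψ` on `S1 × S2` given `S3` is semi-uniform Feller if and only if for
every sequence `s3⁽ⁿ⁾ → s3` in `S3` and every closed `C ⊆ S1`,
`lim_{n → ∞} sup_{B ∈ B(S2)} (Ψ(C × B | s3⁽ⁿ⁾) − Ψ(C × B | s3)) = 0`. -/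
theorem semiUniformFeller_iff_closed_sets
    {S1 S2 S3 : Type*}
    [MetricSpace S1] [TopologicalSpace.SeparableSpace S1] [MeasurableSpace S1] [BorelSpace S1]
    [StandardBorelSpace S1] [Nonempty S1]
    [MetricSpace S2] [TopologicalSpace.SeparableSpace S2] [MeasurableSpace S2] [BorelSpace S2]
    [StandardBorelSpace S2] [Nonempty S2]
    [MetricSpace S3] [TopologicalSpace.SeparableSpace S3] [MeasurableSpace S3] [BorelSpace S3]
    [StandardBorelSpace S3] [Nonempty S3]
    (Ψ : Kernel S3 (S1 × S2)) [IsMarkovKernel Ψ] :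
    SemiUniformFeller Ψ ↔
      ∀ (s : ℕ → S3) (t : S3), Tendsto s atTop (𝓝 t) → ∀ (C : Set S1), IsClosed C →
        Tendsto (fun n => ⨆ B : {B : Set S2 // MeasurableSet B},
          (((Ψ (s n)) (C ×ˢ B.1)).toReal - ((Ψ t) (C ×ˢ B.1)).toReal)) atTop (𝓝 0) := by
  haveI h2X : SecondCountableTopology S1 := UniformSpace.secondCountable_of_separable S1
  haveI h2Y : SecondCountableTopology S2 := UniformSpace.secondCountable_of_separable S2
  constructor
  · intro h s t hst C hC
    exact closed_of_SUF (fun n => Ψ (s n)) (Ψ t) (fun f => h s t hst f) C hC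
  · intro h s t hst f
    exact SUF_of_closed (fun n => Ψ (s n)) (Ψ t) (fun C hC => h s t hst C hC) f
end

section
/- A stochastic kernel Ψ on S1×S2 given S3 is semi-uniform Feller if and only if for every sequence s3^(n) converging to s3 in S3 and every Borel set A ⊆ S1 whose boundary ∂A satisfies Ψ(∂A × S2 | s3) = 0, lim_{n→∞} sup_{B ∈ B(S2)} | Ψ(A×B|s3^(n)) − Ψ(A×B|s3) | = 0. -/
open MeasureTheory ProbabilityTheory Filter Topology

open scoped NNReal ENNReal


section Helpers

variable {S1 S2 : Type*} [MeasurableSpace S1] [MeasurableSpace S2]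

lemma aux_integrable {μ : Measure (S1 × S2)} [IsFiniteMeasure μ] {g : S1 → ℝ}
    (hg : Measurable g) {C : ℝ} (hb : ∀ x, |g x| ≤ C) :
    Integrable (fun x : S1 × S2 => g x.1) μ :=
  (integrable_const C).mono' ((hg.comp measurable_fst).aestronglyMeasurable)
    (Eventually.of_forall fun x => by simpa using hb x.1)

lemma aux_abs_le {μ : Measure (S1 × S2)} [IsProbabilityMeasure μ] {g : S1 → ℝ} {C : ℝ}
    (hC : 0 ≤ C) (hb : ∀ x, |g x| ≤ C) (S : Set (S1 × S2)) :
    |∫ x in S, g x.1 ∂μ| ≤ C := by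
  have h1 : ‖∫ x in S, g x.1 ∂μ‖ ≤ C * ((μ.restrict S) Set.univ).toReal :=
    norm_integral_le_of_norm_le_const (Eventually.of_forall fun x => by simpa using hb x.1)
  have h2 : ((μ.restrict S) Set.univ).toReal ≤ 1 := by
    rw [Measure.restrict_apply_univ]
    simpa using ENNReal.toReal_mono ENNReal.one_ne_top prob_le_one
  calc |∫ x in S, g x.1 ∂μ| ≤ C * ((μ.restrict S) Set.univ).toReal := h1
    _ ≤ C * 1 := by nlinarith
    _ = C := mul_one C

lemma aux_setint_indicator (μ : Measure (S1 × S2)) [IsFiniteMeasure μ] {A : Set S1}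
    (hA : MeasurableSet A) {B : Set S2} (hB : MeasurableSet B) :
    ∫ x in Set.univ ×ˢ B, A.indicator (fun _ => (1:ℝ)) x.1 ∂μ = (μ (A ×ˢ B)).toReal := by
  have hfun : (fun x : S1 × S2 => A.indicator (fun _ => (1:ℝ)) x.1)
      = (A ×ˢ (Set.univ : Set S2)).indicator (1 : S1 × S2 → ℝ) := by
    funext x
    by_cases hx : x.1 ∈ A <;> simp [Set.indicator, hx]
  rw [hfun, integral_indicator_one (hA.prod MeasurableSet.univ),
    measureReal_def, Measure.restrict_apply (hA.prod MeasurableSet.univ)]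
  congr 2
  rw [Set.prod_inter_prod]
  simp

noncomputable def DD (μ ν : Measure (S1 × S2)) (g : S1 → ℝ) : ℝ :=
  ⨆ B : {B : Set S2 // MeasurableSet B},
    |(∫ x in Set.univ ×ˢ B.1, g x.1 ∂μ) - ∫ x in Set.univ ×ˢ B.1, g x.1 ∂ν|

noncomputable def DS (μ ν : Measure (S1 × S2)) (A : Set S1) : ℝ :=
  ⨆ B : {B : Set S2 // MeasurableSet B},
    |(μ (A ×ˢ B.1)).toReal - (ν (A ×ˢ B.1)).toReal|

instance : Nonempty {B : Set S2 // MeasurableSet B} := ⟨⟨∅, MeasurableSet.empty⟩⟩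

lemma abs_sub_le_add {a b : ℝ} {c d : ℝ} (h1 : |a| ≤ c) (h2 : |b| ≤ d) : |a - b| ≤ c + d := by
  calc |a - b| = |a + -b| := by rw [sub_eq_add_neg]
    _ ≤ |a| + |(-b)| := abs_add_le _ _
    _ = |a| + |b| := by rw [abs_neg]
    _ ≤ c + d := add_le_add h1 h2

lemma aux_bdd {μ ν : Measure (S1 × S2)} [IsProbabilityMeasure μ] [IsProbabilityMeasure ν]
    {g : S1 → ℝ} {C : ℝ} (hC : 0 ≤ C) (hb : ∀ x, |g x| ≤ C) :
    BddAbove (Set.range fun B : {B : Set S2 // MeasurableSet B} =>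
      |(∫ x in Set.univ ×ˢ B.1, g x.1 ∂μ) - ∫ x in Set.univ ×ˢ B.1, g x.1 ∂ν|) := by
  refine ⟨C + C, ?_⟩
  rintro x ⟨B, rfl⟩
  exact abs_sub_le_add (aux_abs_le hC hb _) (aux_abs_le hC hb _)

lemma DD_nonneg (μ ν : Measure (S1 × S2)) (g : S1 → ℝ) : 0 ≤ DD μ ν g :=
  Real.iSup_nonneg fun _ => abs_nonneg _

lemma DD_le {μ ν : Measure (S1 × S2)} {g : S1 → ℝ} {K : ℝ}
    (h : ∀ B : Set S2, MeasurableSet B →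
      |(∫ x in Set.univ ×ˢ B, g x.1 ∂μ) - ∫ x in Set.univ ×ˢ B, g x.1 ∂ν| ≤ K) :
    DD μ ν g ≤ K :=
  ciSup_le fun B => h B.1 B.2

lemma le_DD {μ ν : Measure (S1 × S2)} [IsProbabilityMeasure μ] [IsProbabilityMeasure ν]
    {g : S1 → ℝ} {C : ℝ} (hC : 0 ≤ C) (hb : ∀ x, |g x| ≤ C) {B : Set S2}
    (hB : MeasurableSet B) :
    |(∫ x in Set.univ ×ˢ B, g x.1 ∂μ) - ∫ x in Set.univ ×ˢ B, g x.1 ∂ν| ≤ DD μ ν g :=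
  le_ciSup (aux_bdd hC hb) (⟨B, hB⟩ : {B : Set S2 // MeasurableSet B})

lemma toReal_prob_le_one {μ : Measure (S1 × S2)} [IsProbabilityMeasure μ] (S : Set (S1 × S2)) :
    (μ S).toReal ≤ 1 := by
  simpa using ENNReal.toReal_mono ENNReal.one_ne_top prob_le_one

lemma le_DS {μ ν : Measure (S1 × S2)} [IsProbabilityMeasure μ] [IsProbabilityMeasure ν]
    (A : Set S1) {B : Set S2} (hB : MeasurableSet B) :
    |(μ (A ×ˢ B)).toReal - (ν (A ×ˢ B)).toReal| ≤ DS μ ν A := by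
  refine le_ciSup (f := fun B : {B : Set S2 // MeasurableSet B} =>
      |(μ (A ×ˢ B.1)).toReal - (ν (A ×ˢ B.1)).toReal|) ?_ (⟨B, hB⟩ : {B : Set S2 // MeasurableSet B})
  refine ⟨2, ?_⟩
  rintro x ⟨B', rfl⟩
  have h1 : |(μ (A ×ˢ B'.1)).toReal| ≤ 1 := by
    rw [abs_of_nonneg ENNReal.toReal_nonneg]; exact toReal_prob_le_one _
  have h2 : |(ν (A ×ˢ B'.1)).toReal| ≤ 1 := by
    rw [abs_of_nonneg ENNReal.toReal_nonneg]; exact toReal_prob_le_one _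
  exact (abs_sub_le_add h1 h2).trans (by norm_num)

lemma DS_eq_DD {μ ν : Measure (S1 × S2)} [IsProbabilityMeasure μ] [IsProbabilityMeasure ν]
    {A : Set S1} (hA : MeasurableSet A) :
    DS μ ν A = DD μ ν (A.indicator fun _ => (1:ℝ)) := by
  unfold DS DD
  congr 1
  funext B
  rw [aux_setint_indicator μ hA B.2, aux_setint_indicator ν hA B.2]

end Helpers

lemma squeeze_DD {S1 S2 : Type*} [MeasurableSpace S1] [MeasurableSpace S2]
    {μ : ℕ → Measure (S1 × S2)} {ν : Measure (S1 × S2)}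
    [∀ n, IsProbabilityMeasure (μ n)] [IsProbabilityMeasure ν]
    {g : S1 → ℝ} (hg : Measurable g)
    (h : ∀ ε : ℝ, 0 < ε → ∃ (u l : S1 → ℝ) (Cu Cl : ℝ),
      Measurable u ∧ Measurable l ∧ 0 ≤ Cu ∧ 0 ≤ Cl ∧ (∀ x, |u x| ≤ Cu) ∧ (∀ x, |l x| ≤ Cl) ∧
      (∀ x, l x ≤ g x) ∧ (∀ x, g x ≤ u x) ∧
      (∫ x, (u x.1 - l x.1) ∂ν) ≤ ε ∧
      Tendsto (fun n => DD (μ n) ν u) atTop (𝓝 0) ∧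
      Tendsto (fun n => DD (μ n) ν l) atTop (𝓝 0)) :
    Tendsto (fun n => DD (μ n) ν g) atTop (𝓝 0) := by
  rw [Metric.tendsto_atTop]
  intro ε hε
  obtain ⟨u, l, Cu, Cl, hu, hl, hCu, hCl, hbu, hbl, hlg, hgu, hint, htu, htl⟩ :=
    h (ε/4) (by linarith)
  have hbg : ∀ x, |g x| ≤ max Cu Cl := by
    intro x
    rcases abs_le.1 (hbu x) with ⟨_, hu2⟩
    rcases abs_le.1 (hbl x) with ⟨hl1, _⟩
    refine abs_le.2 ⟨?_, ?_⟩
    · have : -(max Cu Cl) ≤ -Cl := neg_le_neg (le_max_right _ _)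
      exact this.trans (hl1.trans (hlg x))
    · exact ((hgu x).trans hu2).trans (le_max_left _ _)
  have hIg : Integrable (fun x : S1 × S2 => g x.1) ν := aux_integrable hg hbg
  have hIu : Integrable (fun x : S1 × S2 => u x.1) ν := aux_integrable hu hbu
  have hIl : Integrable (fun x : S1 × S2 => l x.1) ν := aux_integrable hl hbl
  -- main per-n bound
  have main : ∀ n, DD (μ n) ν g ≤ DD (μ n) ν u + DD (μ n) ν l + ε/4 := by
    intro n
    apply DD_le
    intro B hB
    set S := Set.univ ×ˢ B with hS
    have hIgn : Integrable (fun x : S1 × S2 => g x.1) ((μ n).restrict S) :=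
      (aux_integrable hg hbg).restrict
    have hIun : Integrable (fun x : S1 × S2 => u x.1) ((μ n).restrict S) :=
      (aux_integrable hu hbu).restrict
    have hIln : Integrable (fun x : S1 × S2 => l x.1) ((μ n).restrict S) :=
      (aux_integrable hl hbl).restrict
    have hIgr : Integrable (fun x : S1 × S2 => g x.1) (ν.restrict S) := hIg.restrict
    have hIur : Integrable (fun x : S1 × S2 => u x.1) (ν.restrict S) := hIu.restrict
    have hIlr : Integrable (fun x : S1 × S2 => l x.1) (ν.restrict S) := hIl.restrict
    have hrest1 : ∫ x in S, (u x.1 - g x.1) ∂ν ≤ ε/4 := by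
      have e1 : ∫ x in S, (u x.1 - g x.1) ∂ν ≤ ∫ x, (u x.1 - g x.1) ∂ν :=
        integral_mono_measure Measure.restrict_le_self
          (Eventually.of_forall fun x => sub_nonneg.2 (hgu x.1)) (hIu.sub hIg)
      have e2 : ∫ x, (u x.1 - g x.1) ∂ν ≤ ∫ x, (u x.1 - l x.1) ∂ν :=
        integral_mono (hIu.sub hIg) (hIu.sub hIl)
          (fun x => sub_le_sub_left (hlg x.1) _)
      linarith
    have hrest2 : ∫ x in S, (g x.1 - l x.1) ∂ν ≤ ε/4 := by
      have e1 : ∫ x in S, (g x.1 - l x.1) ∂ν ≤ ∫ x, (g x.1 - l x.1) ∂ν :=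
        integral_mono_measure Measure.restrict_le_self
          (Eventually.of_forall fun x => sub_nonneg.2 (hlg x.1)) (hIg.sub hIl)
      have e2 : ∫ x, (g x.1 - l x.1) ∂ν ≤ ∫ x, (u x.1 - l x.1) ∂ν :=
        integral_mono (hIg.sub hIl) (hIu.sub hIl)
          (fun x => sub_le_sub_right (hgu x.1) _)
      linarith
    have du : ∫ x in S, u x.1 ∂(μ n) - ∫ x in S, u x.1 ∂ν ≤ DD (μ n) ν u :=
      (le_abs_self _).trans (le_DD hCu hbu hB)
    have dl : ∫ x in S, l x.1 ∂ν - ∫ x in S, l x.1 ∂(μ n) ≤ DD (μ n) ν l := by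
      have := (le_DD (μ := μ n) (ν := ν) hCl hbl hB)
      rw [abs_sub_comm] at this
      exact (le_abs_self _).trans this
    have m1 : ∫ x in S, g x.1 ∂(μ n) ≤ ∫ x in S, u x.1 ∂(μ n) :=
      integral_mono hIgn hIun (fun x => hgu x.1)
    have m2 : ∫ x in S, l x.1 ∂(μ n) ≤ ∫ x in S, g x.1 ∂(μ n) :=
      integral_mono hIln hIgn (fun x => hlg x.1)
    have s1 : ∫ x in S, (u x.1 - g x.1) ∂ν = ∫ x in S, u x.1 ∂ν - ∫ x in S, g x.1 ∂ν :=
      integral_sub hIur hIgr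
    have s2 : ∫ x in S, (g x.1 - l x.1) ∂ν = ∫ x in S, g x.1 ∂ν - ∫ x in S, l x.1 ∂ν :=
      integral_sub hIgr hIlr
    have hDDu := DD_nonneg (μ n) ν u
    have hDDl := DD_nonneg (μ n) ν l
    rw [abs_sub_le_iff]
    constructor <;> [skip; skip] <;> nlinarith [du, dl, m1, m2, hrest1, hrest2, s1, s2]
  obtain ⟨N1, hN1⟩ := Metric.tendsto_atTop.1 htu (ε/4) (by linarith)
  obtain ⟨N2, hN2⟩ := Metric.tendsto_atTop.1 htl (ε/4) (by linarith)
  refine ⟨max N1 N2, fun n hn => ?_⟩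
  have h1 : DD (μ n) ν u < ε/4 := by
    have := hN1 n (le_trans (le_max_left _ _) hn)
    rw [Real.dist_eq, sub_zero] at this
    exact (le_abs_self _).trans_lt this
  have h2 : DD (μ n) ν l < ε/4 := by
    have := hN2 n (le_trans (le_max_right _ _) hn)
    rw [Real.dist_eq, sub_zero] at this
    exact (le_abs_self _).trans_lt this
  rw [Real.dist_eq, sub_zero, abs_of_nonneg (DD_nonneg _ _ _)]
  calc DD (μ n) ν g ≤ DD (μ n) ν u + DD (μ n) ν l + ε/4 := main n
    _ < ε/4 + ε/4 + ε/4 := by linarith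
    _ < ε := by linarith

lemma DD_stepfun {S1 S2 : Type*} [MeasurableSpace S1] [MeasurableSpace S2]
    {μ : ℕ → Measure (S1 × S2)} {ν : Measure (S1 × S2)}
    [∀ n, IsProbabilityMeasure (μ n)] [IsProbabilityMeasure ν]
    (m : ℕ) (a : ℕ → ℝ) (A : ℕ → Set S1) (hA : ∀ i, MeasurableSet (A i))
    (hT : ∀ i, i < m → Tendsto (fun n => DS (μ n) ν (A i)) atTop (𝓝 0)) :
    Tendsto (fun n => DD (μ n) ν
      (fun x => ∑ i ∈ Finset.range m, a i * (A i).indicator (fun _ => (1:ℝ)) x)) atTop (𝓝 0) := by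
  have key : ∀ n, DD (μ n) ν
      (fun x => ∑ i ∈ Finset.range m, a i * (A i).indicator (fun _ => (1:ℝ)) x)
      ≤ ∑ i ∈ Finset.range m, |a i| * DS (μ n) ν (A i) := by
    intro n
    apply DD_le
    intro B hB
    have comp : ∀ (ρ : Measure (S1 × S2)), IsProbabilityMeasure ρ →
        ∫ x in Set.univ ×ˢ B,
          (∑ i ∈ Finset.range m, a i * (A i).indicator (fun _ => (1:ℝ)) x.1) ∂ρ
          = ∑ i ∈ Finset.range m, a i * (ρ (A i ×ˢ B)).toReal := by
      intro ρ hρ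
      have hIint : ∀ i ∈ Finset.range m,
          Integrable (fun x : S1 × S2 => a i * (A i).indicator (fun _ => (1:ℝ)) x.1)
            (ρ.restrict (Set.univ ×ˢ B)) := by
        intro i _
        refine Integrable.const_mul ?_ _
        exact (aux_integrable (measurable_const.indicator (hA i)) (C := 1) (fun x => by
          by_cases hx : x ∈ A i <;> simp [Set.indicator, hx])).restrict
      rw [integral_finset_sum _ hIint]
      refine Finset.sum_congr rfl fun i _ => ?_
      rw [integral_const_mul, aux_setint_indicator ρ (hA i) hB]
    show |(∫ x in Set.univ ×ˢ B,
        (∑ i ∈ Finset.range m, a i * (A i).indicator (fun _ => (1:ℝ)) x.1) ∂(μ n)) -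
        ∫ x in Set.univ ×ˢ B,
        (∑ i ∈ Finset.range m, a i * (A i).indicator (fun _ => (1:ℝ)) x.1) ∂ν| ≤ _
    rw [comp (μ n) inferInstance, comp ν inferInstance, ← Finset.sum_sub_distrib]
    refine (Finset.abs_sum_le_sum_abs _ _).trans ?_
    refine Finset.sum_le_sum fun i hi => ?_
    rw [← mul_sub, abs_mul]
    exact mul_le_mul_of_nonneg_left (le_DS _ hB) (abs_nonneg _)
  refine squeeze_zero (fun n => DD_nonneg _ _ _) key ?_
  have h0 : Tendsto (fun n => ∑ i ∈ Finset.range m, |a i| * DS (μ n) ν (A i)) atTop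
      (𝓝 (∑ i ∈ Finset.range m, |a i| * 0)) :=
    tendsto_finset_sum _ (fun i hi => ((hT i (Finset.mem_range.1 hi)).const_mul _))
  simpa using h0

/-- A stochastic kernel `Ψ` on `S1 × S2` given `S3` is semi-uniform Feller if and only if for
every sequence `s3⁽ⁿ⁾ → s3` in `S3` and every Borel `A ⊆ S1` with `Ψ(∂A × S2 | s3) = 0`,
`lim_{n → ∞} sup_{B ∈ B(S2)} |Ψ(A × B | s3⁽ⁿ⁾) − Ψ(A × B | s3)| = 0`. -/
theorem semiUniformFeller_iff_continuity_sets
    {S1 S2 S3 : Type*}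
    [MetricSpace S1] [TopologicalSpace.SeparableSpace S1] [MeasurableSpace S1] [BorelSpace S1]
    [StandardBorelSpace S1] [Nonempty S1]
    [MetricSpace S2] [TopologicalSpace.SeparableSpace S2] [MeasurableSpace S2] [BorelSpace S2]
    [StandardBorelSpace S2] [Nonempty S2]
    [MetricSpace S3] [TopologicalSpace.SeparableSpace S3] [MeasurableSpace S3] [BorelSpace S3]
    [StandardBorelSpace S3] [Nonempty S3]
    (Ψ : Kernel S3 (S1 × S2)) [IsMarkovKernel Ψ] :
    SemiUniformFeller Ψ ↔
      ∀ (s : ℕ → S3) (t : S3), Tendsto s atTop (𝓝 t) → ∀ (A : Set S1), MeasurableSet A →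
        (Ψ t) (frontier A ×ˢ (Set.univ : Set S2)) = 0 →
        Tendsto (fun n => ⨆ B : {B : Set S2 // MeasurableSet B},
          |((Ψ (s n)) (A ×ˢ B.1)).toReal - ((Ψ t) (A ×ˢ B.1)).toReal|) atTop (𝓝 0) := by
  constructor
  · intro hSUF s t hst A hA hfront
    haveI : SecondCountableTopology S1 := UniformSpace.secondCountable_of_separable S1
    haveI : SecondCountableTopology S2 := UniformSpace.secondCountable_of_separable S2
    haveI : BorelSpace (S1 × S2) := Prod.borelSpace
    have key : Tendsto (fun n => DD (Ψ (s n)) (Ψ t) (A.indicator fun _ => (1:ℝ))) atTop (𝓝 0) := by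
      apply squeeze_DD (measurable_const.indicator hA)
      intro ε hε
      have δpos : ∀ k : ℕ, 0 < (1:ℝ) / (k + 1) := fun k => by positivity
      have δlim : Tendsto (fun k : ℕ => (1:ℝ) / (k + 1)) atTop (𝓝 0) :=
        tendsto_one_div_add_atTop_nhds_zero_nat
      set uB : ℕ → BoundedContinuousFunction S1 ℝ := fun k =>
        BoundedContinuousFunction.comp _ isometry_subtype_coe.lipschitz
          (thickenedIndicator (δpos k) A) with huB
      set wB : ℕ → BoundedContinuousFunction S1 ℝ := fun k =>
        BoundedContinuousFunction.comp _ isometry_subtype_coe.lipschitz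
          (thickenedIndicator (δpos k) Aᶜ) with hwB
      set lB : ℕ → BoundedContinuousFunction S1 ℝ := fun k =>
        BoundedContinuousFunction.const S1 (1:ℝ) - wB k with hlB
      have uB_apply : ∀ k x, uB k x = ((thickenedIndicator (δpos k) A x : ℝ≥0) : ℝ) :=
        fun k x => rfl
      have wB_apply : ∀ k x, wB k x = ((thickenedIndicator (δpos k) Aᶜ x : ℝ≥0) : ℝ) :=
        fun k x => rfl
      have lB_apply : ∀ k x, lB k x = 1 - ((thickenedIndicator (δpos k) Aᶜ x : ℝ≥0) : ℝ) := by
        intro k x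
        simp [hlB, wB_apply]
      have hbu : ∀ k x, |uB k x| ≤ 1 := by
        intro k x
        rw [uB_apply, abs_of_nonneg (NNReal.coe_nonneg _)]
        exact_mod_cast thickenedIndicator_le_one (δpos k) A x
      have hbw : ∀ k x, 0 ≤ wB k x ∧ wB k x ≤ 1 := by
        intro k x
        refine ⟨by rw [wB_apply]; exact NNReal.coe_nonneg _, ?_⟩
        rw [wB_apply]
        exact_mod_cast thickenedIndicator_le_one (δpos k) Aᶜ x
      have hbl : ∀ k x, |lB k x| ≤ 1 := by
        intro k x
        obtain ⟨h1, h2⟩ := hbw k x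
        have : lB k x = 1 - wB k x := by simp [hlB]
        rw [this, abs_le]
        constructor <;> linarith
      have hgu : ∀ k x, A.indicator (fun _ => (1:ℝ)) x ≤ uB k x := by
        intro k x
        by_cases hx : x ∈ A
        · rw [Set.indicator_of_mem hx, uB_apply, thickenedIndicator_one (δpos k) A hx]
          norm_num
        · rw [Set.indicator_of_notMem hx, uB_apply]
          exact NNReal.coe_nonneg _
      have hlg : ∀ k x, lB k x ≤ A.indicator (fun _ => (1:ℝ)) x := by
        intro k x
        by_cases hx : x ∈ A
        · rw [Set.indicator_of_mem hx, lB_apply]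
          have := (hbw k x).1
          rw [wB_apply] at this
          linarith
        · rw [Set.indicator_of_notMem hx, lB_apply,
            thickenedIndicator_one (δpos k) Aᶜ hx]
          norm_num
      -- dominated convergence for the error integral
      have convA : ∀ (E : Set S1) (x1 : S1),
          Tendsto (fun k => ((thickenedIndicator (δpos k) E x1 : ℝ≥0) : ℝ)) atTop
            (𝓝 ((Set.indicator (closure E) (fun _ => (1:ℝ≥0)) x1 : ℝ≥0) : ℝ)) := by
        intro E x1
        have h := thickenedIndicator_tendsto_indicator_closure δpos δlim E
        rw [tendsto_pi_nhds] at h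
        exact (NNReal.continuous_coe.tendsto _).comp (h x1)
      have hG : Tendsto (fun k => ∫ x, (uB k x.1 - lB k x.1) ∂(Ψ t)) atTop (𝓝 0) := by
        have hDCT : Tendsto (fun k => ∫ x, (uB k x.1 - lB k x.1) ∂(Ψ t)) atTop
            (𝓝 (∫ x : S1 × S2,
              (frontier A ×ˢ (Set.univ : Set S2)).indicator (fun _ => (1:ℝ)) x ∂(Ψ t))) := by
          apply tendsto_integral_of_dominated_convergence (bound := fun _ => (2:ℝ))
          · intro k
            exact (((uB k).continuous.comp continuous_fst).sub
              ((lB k).continuous.comp continuous_fst)).aestronglyMeasurable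
          · exact integrable_const 2
          · intro k
            refine Eventually.of_forall fun x => ?_
            rw [Real.norm_eq_abs]
            exact (abs_sub_le_add (hbu k x.1) (hbl k x.1)).trans (by norm_num)
          · refine Eventually.of_forall fun x => ?_
            have h1 := convA A x.1
            have h2 : Tendsto (fun k => lB k x.1) atTop
                (𝓝 (1 - ((Set.indicator (closure Aᶜ) (fun _ => (1:ℝ≥0)) x.1 : ℝ≥0) : ℝ))) := by
              have := (convA Aᶜ x.1).const_sub 1
              refine this.congr fun k => ?_
              rw [lB_apply]
            have h3 : Tendsto (fun k => uB k x.1 - lB k x.1) atTop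
                (𝓝 (((Set.indicator (closure A) (fun _ => (1:ℝ≥0)) x.1 : ℝ≥0) : ℝ)
                  - (1 - ((Set.indicator (closure Aᶜ) (fun _ => (1:ℝ≥0)) x.1 : ℝ≥0) : ℝ)))) := by
              have := h1.sub h2
              refine this.congr fun k => ?_
              rw [uB_apply]
            convert h3 using 2
            by_cases hc1 : x.1 ∈ closure A
            · by_cases hc2 : x.1 ∈ closure Aᶜ
              · have hfr : x.1 ∈ frontier A := by
                  rw [frontier_eq_closure_inter_closure]
                  exact ⟨hc1, hc2⟩
                have hx : x ∈ frontier A ×ˢ (Set.univ : Set S2) := ⟨hfr, Set.mem_univ _⟩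
                rw [Set.indicator_of_mem hx, Set.indicator_of_mem hc1,
                  Set.indicator_of_mem hc2]
                norm_num
              · have hfr : x.1 ∉ frontier A := by
                  rw [frontier_eq_closure_inter_closure]
                  exact fun h => hc2 h.2
                have hx : x ∉ frontier A ×ˢ (Set.univ : Set S2) := fun h => hfr h.1
                rw [Set.indicator_of_notMem hx, Set.indicator_of_mem hc1,
                  Set.indicator_of_notMem hc2]
                norm_num
            · have hc2 : x.1 ∈ closure Aᶜ := subset_closure fun hxA => hc1 (subset_closure hxA)
              have hfr : x.1 ∉ frontier A := by
                rw [frontier_eq_closure_inter_closure]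
                exact fun h => hc1 h.1
              have hx : x ∉ frontier A ×ˢ (Set.univ : Set S2) := fun h => hfr h.1
              rw [Set.indicator_of_notMem hx, Set.indicator_of_notMem hc1,
                Set.indicator_of_mem hc2]
              norm_num
        have hzero : ∫ x : S1 × S2,
            (frontier A ×ˢ (Set.univ : Set S2)).indicator (fun _ => (1:ℝ)) x ∂(Ψ t) = 0 := by
          have : (fun x : S1 × S2 => (frontier A ×ˢ (Set.univ : Set S2)).indicator
              (fun _ => (1:ℝ)) x) = (frontier A ×ˢ (Set.univ : Set S2)).indicator
              (1 : S1 × S2 → ℝ) := by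
            funext x; by_cases hx : x ∈ frontier A ×ˢ (Set.univ : Set S2) <;>
              simp [Set.indicator, hx]
          rw [this, integral_indicator_one
            ((isClosed_frontier.measurableSet).prod MeasurableSet.univ), measureReal_def, hfront]
          simp
        rwa [hzero] at hDCT
      obtain ⟨k0, hk0⟩ := Metric.tendsto_atTop.1 hG ε hε
      have hGk0 : ∫ x, (uB k0 x.1 - lB k0 x.1) ∂(Ψ t) ≤ ε := by
        have h := hk0 k0 le_rfl
        rw [Real.dist_eq, sub_zero] at h
        exact (le_abs_self _).trans h.le
      exact ⟨⇑(uB k0), ⇑(lB k0), 1, 1, (uB k0).continuous.measurable,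
        (lB k0).continuous.measurable, zero_le_one, zero_le_one, hbu k0, hbl k0,
        hlg k0, hgu k0, hGk0, hSUF s t hst (uB k0), hSUF s t hst (lB k0)⟩
    exact Filter.Tendsto.congr (fun n => (DS_eq_DD hA).symm) key
  · intro H s t hst f
    have hTuniv : Tendsto (fun n => DS (Ψ (s n)) (Ψ t) Set.univ) atTop (𝓝 0) :=
      H s t hst Set.univ MeasurableSet.univ (by simp [frontier_univ])
    show Tendsto (fun n => DD (Ψ (s n)) (Ψ t) ⇑f) atTop (𝓝 0)
    apply squeeze_DD f.continuous.measurable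
    intro ε hε
    classical
    set M := ‖f‖ with hM
    have hM0 : 0 ≤ M := norm_nonneg f
    have hcnt : Set.Countable {c : ℝ | 0 < Ψ t {x : S1 × S2 | f x.1 = c}} :=
      Measure.countable_meas_level_set_pos (f.continuous.measurable.comp measurable_fst)
    set ε' : ℝ := min ε 1 / 2 with hε'
    have hε'pos : 0 < ε' := by
      have : 0 < min ε 1 := lt_min hε one_pos
      rw [hε']; linarith
    have h2ε' : 2 * ε' ≤ ε := by
      have : min ε 1 ≤ ε := min_le_left _ _
      rw [hε']; linarith
    have hε'half : ε' ≤ 1/2 := by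
      have : min ε 1 ≤ 1 := min_le_right _ _
      rw [hε']; linarith
    have hchoice : ∀ i : ℕ, ∃ cc : ℝ,
        cc ∈ Set.Ioo (-M - 1 + i * ε') (-M - 1 + (i+1) * ε')
        ∧ ¬ 0 < Ψ t {x : S1 × S2 | f x.1 = cc} := by
      intro i
      have hlt : (-M - 1 + (i:ℝ) * ε') < (-M - 1 + ((i:ℝ)+1) * ε') := by nlinarith [hε'pos]
      have hd : Dense {c : ℝ | 0 < Ψ t {x : S1 × S2 | f x.1 = c}}ᶜ := hcnt.dense_compl ℝ
      obtain ⟨cc, hcc1, hcc2⟩ := hd.exists_mem_open isOpen_Ioo (Set.nonempty_Ioo.2 hlt)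
      exact ⟨cc, hcc2, hcc1⟩
    choose c hc1 hc2 using hchoice
    have hmono : StrictMono c := by
      apply strictMono_nat_of_lt_succ
      intro i
      have a := (hc1 i).2
      have b := (hc1 (i+1)).1
      push_cast at a b
      linarith
    have hgap : ∀ i, c (i+1) - c i < 2 * ε' := by
      intro i
      have a := (hc1 i).1
      have b := (hc1 (i+1)).2
      push_cast at a b
      nlinarith [a, b]
    set m : ℕ := ⌈(2*M+2)/ε'⌉₊ + 1 with hm
    have hcm : M < c m := by
      have h1 := (hc1 m).1
      have h2 : (2*M+2) ≤ (m:ℝ) * ε' := by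
        have hce := Nat.le_ceil ((2*M+2)/ε')
        have hmm : ((⌈(2*M+2)/ε'⌉₊ : ℝ)) ≤ (m:ℝ) := by
          rw [hm]; push_cast; linarith
        have := (div_le_iff₀ hε'pos).1 (le_trans hce hmm)
        linarith
      linarith
    have hc0 : ∀ x : S1, c 0 < f x := by
      intro x
      have h1 := (hc1 0).2
      have h2 : ‖f x‖ ≤ M := f.norm_coe_le_norm x
      rw [Real.norm_eq_abs] at h2
      have h3 := (abs_le.1 h2).1
      push_cast at h1
      linarith
    have hfM : ∀ x : S1, f x ≤ M := by
      intro x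
      have h2 : ‖f x‖ ≤ M := f.norm_coe_le_norm x
      rw [Real.norm_eq_abs] at h2
      exact (abs_le.1 h2).2
    have hj : ∀ x : S1, ∃ j : ℕ, j < m ∧ c j < f x ∧ f x ≤ c (j+1) ∧
        (∑ i ∈ Finset.range m,
          (c (i+1) - c i) * ({y : S1 | c (i+1) < f y}).indicator (fun _ => (1:ℝ)) x)
          = c j - c 0 := by
      intro x
      set P : ℕ → Prop := fun i => c i < f x with hP
      set j := Nat.findGreatest P m with hjdef
      have hspec : P j := Nat.findGreatest_spec (Nat.zero_le m) (hc0 x)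
      have hjm : j ≤ m := Nat.findGreatest_le m
      have hjlt : j < m := by
        rcases lt_or_eq_of_le hjm with h | h
        · exact h
        · exfalso
          rw [h] at hspec
          exact absurd hspec (not_lt.2 ((hfM x).trans hcm.le))
      have hnext : f x ≤ c (j+1) := by
        by_contra hcon
        push_neg at hcon
        have := Nat.le_findGreatest (Nat.succ_le_of_lt hjlt) (show P (j+1) from hcon)
        omega
      refine ⟨j, hjlt, hspec, hnext, ?_⟩
      have hterm : ∀ i ∈ Finset.range m,
          (c (i+1) - c i) * ({y : S1 | c (i+1) < f y}).indicator (fun _ => (1:ℝ)) x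
            = if i < j then c (i+1) - c i else 0 := by
        intro i hi
        rw [Finset.mem_range] at hi
        by_cases hij : i < j
        · have hmem : x ∈ {y : S1 | c (i+1) < f y} :=
            lt_of_le_of_lt (hmono.monotone (Nat.succ_le_of_lt hij)) hspec
          rw [Set.indicator_of_mem hmem, if_pos hij, mul_one]
        · have hnm : x ∉ {y : S1 | c (i+1) < f y} := by
            intro hcon
            have := Nat.le_findGreatest (Nat.succ_le_of_lt hi) (show P (i+1) from hcon)
            omega
          rw [Set.indicator_of_notMem hnm, if_neg hij, mul_zero]
      rw [Finset.sum_congr rfl hterm]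
      have hsf : ∑ i ∈ Finset.range m, (if i < j then c (i+1) - c i else 0)
          = ∑ i ∈ Finset.range j, (c (i+1) - c i) := by
        rw [← Finset.sum_filter]
        congr 1
        ext i
        simp only [Finset.mem_filter, Finset.mem_range]
        omega
      rw [hsf, Finset.sum_range_sub]
    set Afam : ℕ → Set S1 := fun i => if i = 0 then Set.univ else {y : S1 | c i < f y}
      with hAfam
    have hAmeas : ∀ i, MeasurableSet (Afam i) := by
      intro i
      by_cases h : i = 0
      · simp [hAfam, h]
      · simp only [hAfam, if_neg h]
        exact (isOpen_lt continuous_const f.continuous).measurableSet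
    have hAT : ∀ i, i < m + 1 → Tendsto (fun n => DS (Ψ (s n)) (Ψ t) (Afam i)) atTop (𝓝 0) := by
      intro i _
      by_cases h : i = 0
      · simpa [hAfam, h] using hTuniv
      · have hopen : IsOpen {y : S1 | c i < f y} := isOpen_lt continuous_const f.continuous
        have hsub : frontier {y : S1 | c i < f y} ⊆ {y : S1 | f y = c i} := by
          have h1 : {y : S1 | c i < f y} = ⇑f ⁻¹' Set.Ioi (c i) := rfl
          rw [h1]
          refine (f.continuous.frontier_preimage_subset _).trans ?_
          rw [frontier_Ioi]
          intro y hy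
          simpa using hy
        have hzero : Ψ t (frontier {y : S1 | c i < f y} ×ˢ (Set.univ : Set S2)) = 0 := by
          have hle : frontier {y : S1 | c i < f y} ×ˢ (Set.univ : Set S2)
              ⊆ {x : S1 × S2 | f x.1 = c i} := fun x hx => hsub hx.1
          have h0 : Ψ t {x : S1 × S2 | f x.1 = c i} = 0 := le_zero_iff.1 (not_lt.1 (hc2 i))
          exact le_antisymm (le_trans (measure_mono hle) h0.le) zero_le
        have := H s t hst {y : S1 | c i < f y} hopen.measurableSet hzero
        simpa [hAfam, h, DS] using this
    have hstep : ∀ a0 : ℝ, Tendsto (fun n => DD (Ψ (s n)) (Ψ t)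
        (fun x => ∑ i ∈ Finset.range (m+1),
          (if i = 0 then a0 else c i - c (i-1)) * (Afam i).indicator (fun _ => (1:ℝ)) x))
        atTop (𝓝 0) := by
      intro a0
      exact DD_stepfun (m+1) _ Afam hAmeas hAT
    have hform : ∀ (a0 : ℝ) (x : S1),
        (∑ i ∈ Finset.range (m+1),
          (if i = 0 then a0 else c i - c (i-1)) * (Afam i).indicator (fun _ => (1:ℝ)) x)
          = a0 + ∑ i ∈ Finset.range m,
            (c (i+1) - c i) * ({y : S1 | c (i+1) < f y}).indicator (fun _ => (1:ℝ)) x := by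
      intro a0 x
      rw [Finset.sum_range_succ']
      have h0 : (if (0:ℕ) = 0 then a0 else c 0 - c (0-1)) * (Afam 0).indicator
          (fun _ => (1:ℝ)) x = a0 := by
        simp [hAfam]
      have hsh : ∀ i ∈ Finset.range m,
          (if i+1 = 0 then a0 else c (i+1) - c (i+1-1)) * (Afam (i+1)).indicator
            (fun _ => (1:ℝ)) x
            = (c (i+1) - c i) * ({y : S1 | c (i+1) < f y}).indicator (fun _ => (1:ℝ)) x := by
        intro i _
        simp [hAfam]
      rw [Finset.sum_congr rfl hsh, h0, add_comm]
    have hval : ∀ (a0 : ℝ) (x : S1), ∃ j : ℕ, j < m ∧ c j < f x ∧ f x ≤ c (j+1) ∧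
        (∑ i ∈ Finset.range (m+1),
          (if i = 0 then a0 else c i - c (i-1)) * (Afam i).indicator (fun _ => (1:ℝ)) x)
          = a0 + (c j - c 0) := by
      intro a0 x
      obtain ⟨j, h1, h2, h3, h4⟩ := hj x
      exact ⟨j, h1, h2, h3, by rw [hform, h4]⟩
    have hmeas : ∀ a0 : ℝ, Measurable (fun x : S1 => ∑ i ∈ Finset.range (m+1),
        (if i = 0 then a0 else c i - c (i-1)) * (Afam i).indicator (fun _ => (1:ℝ)) x) := by
      intro a0
      apply Finset.measurable_sum
      intro i _
      exact (measurable_const.indicator (hAmeas i)).const_mul _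
    refine ⟨fun x => ∑ i ∈ Finset.range (m+1),
        (if i = 0 then c 0 + 2*ε' else c i - c (i-1)) * (Afam i).indicator (fun _ => (1:ℝ)) x,
      fun x => ∑ i ∈ Finset.range (m+1),
        (if i = 0 then c 0 else c i - c (i-1)) * (Afam i).indicator (fun _ => (1:ℝ)) x,
      |c 0| + |c m| + 2*ε', |c 0| + |c m|,
      hmeas _, hmeas _, by positivity, by positivity, ?_, ?_, ?_, ?_, ?_, hstep _, hstep _⟩
    · -- |u x| ≤ Cu
      intro x
      obtain ⟨j, hj1, _, _, h4⟩ := hval (c 0 + 2*ε') x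
      beta_reduce
      rw [h4]
      have hcj1 : c 0 ≤ c j := hmono.monotone (Nat.zero_le j)
      have hcj2 : c j ≤ c m := hmono.monotone hj1.le
      have := le_abs_self (c 0)
      have := neg_abs_le (c 0)
      have := le_abs_self (c m)
      have := neg_abs_le (c m)
      rw [abs_le]
      constructor <;> linarith
    · -- |l x| ≤ Cl
      intro x
      obtain ⟨j, hj1, _, _, h4⟩ := hval (c 0) x
      beta_reduce
      rw [h4]
      have hcj1 : c 0 ≤ c j := hmono.monotone (Nat.zero_le j)
      have hcj2 : c j ≤ c m := hmono.monotone hj1.le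
      have := le_abs_self (c 0)
      have := neg_abs_le (c 0)
      have := le_abs_self (c m)
      have := neg_abs_le (c m)
      rw [abs_le]
      constructor <;> linarith
    · -- l ≤ f
      intro x
      obtain ⟨j, _, h2, _, h4⟩ := hval (c 0) x
      beta_reduce
      rw [h4]
      linarith
    · -- f ≤ u
      intro x
      obtain ⟨j, _, _, h3, h4⟩ := hval (c 0 + 2*ε') x
      beta_reduce
      rw [h4]
      have := hgap j
      linarith
    · -- integral bound
      have hdiff : (fun x : S1 × S2 =>
          (∑ i ∈ Finset.range (m+1),
            (if i = 0 then c 0 + 2*ε' else c i - c (i-1)) * (Afam i).indicator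
              (fun _ => (1:ℝ)) x.1)
          - ∑ i ∈ Finset.range (m+1),
            (if i = 0 then c 0 else c i - c (i-1)) * (Afam i).indicator (fun _ => (1:ℝ)) x.1)
          = fun _ => 2*ε' := by
        funext x
        rw [hform, hform]
        ring
      rw [hdiff, integral_const]
      simp only [probReal_univ, smul_eq_mul, one_mul]
      exact h2ε'
end

section
/- If a stochastic kernel Ψ on S1×S2 given S3 is semi-uniform Feller, then Ψ is weakly continuous: for every sequence s3^(n) converging to s3 in S3 and every bounded continuous function g: S1×S2 → ℝ, ∫_{S1×S2} g dΨ(·|s3^(n)) → ∫_{S1×S2} g dΨ(·|s3) as n → ∞. -/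
set_option linter.unusedSectionVars false
set_option maxHeartbeats 1000000

open MeasureTheory ProbabilityTheory Filter Topology
open scoped NNReal ENNReal

section SUFAux

variable {S1 S2 S3 : Type*}
  [MetricSpace S1] [MeasurableSpace S1] [BorelSpace S1] [TopologicalSpace.SeparableSpace S1]
  [MetricSpace S2] [MeasurableSpace S2] [BorelSpace S2] [TopologicalSpace.SeparableSpace S2]
  [MetricSpace S3] [MeasurableSpace S3] [BorelSpace S3]


variable {S1 S2 S3 : Type*}
  [MetricSpace S1] [MeasurableSpace S1] [BorelSpace S1] [TopologicalSpace.SeparableSpace S1]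
  [MetricSpace S2] [MeasurableSpace S2] [BorelSpace S2] [TopologicalSpace.SeparableSpace S2]
  [MetricSpace S3] [MeasurableSpace S3] [BorelSpace S3]

lemma suf_setIntegral_indicator (μ : Measure (S1 × S2)) {F : Set S1} (hF : MeasurableSet F)
    (V : Set S2) :
    ∫ x in Set.univ ×ˢ V, F.indicator (fun _ => (1:ℝ)) x.1 ∂μ = (μ (F ×ˢ V)).toReal := by
  have h1 : (fun x : S1 × S2 => F.indicator (fun _ => (1:ℝ)) x.1)
      = (F ×ˢ (Set.univ : Set S2)).indicator (fun _ => (1:ℝ)) := by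
    funext x
    by_cases hx : x.1 ∈ F <;> simp [Set.indicator, hx, Set.mem_prod]
  rw [h1, setIntegral_indicator (hF.prod MeasurableSet.univ), Set.prod_inter_prod,
    Set.univ_inter, Set.inter_univ, setIntegral_const, smul_eq_mul, mul_one, measureReal_def]

lemma suf_int_one (μ : Measure (S1 × S2)) (V : Set S2) :
    ∫ x in Set.univ ×ˢ V, (1 : BoundedContinuousFunction S1 ℝ) x.1 ∂μ
      = (μ (Set.univ ×ˢ V)).toReal := by
  simp [measureReal_def]

lemma suf_stepA (Ψ : Kernel S3 (S1 × S2)) [IsMarkovKernel Ψ] (hΨ : SemiUniformFeller Ψ)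
    {s : ℕ → S3} {t : S3} (hst : Tendsto s atTop (𝓝 t))
    (f : BoundedContinuousFunction S1 ℝ) {B : Set S2} (hB : MeasurableSet B) :
    Tendsto (fun n => ∫ x in Set.univ ×ˢ B, f x.1 ∂(Ψ (s n))) atTop
      (𝓝 (∫ x in Set.univ ×ˢ B, f x.1 ∂(Ψ t))) := by
  haveI := UniformSpace.secondCountable_of_separable S1
  haveI := UniformSpace.secondCountable_of_separable S2
  have hsup := hΨ s t hst f
  have hbd : ∀ (μ : Measure (S1 × S2)) [IsProbabilityMeasure μ] (A : Set (S1 × S2)),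
      ‖∫ x in A, f x.1 ∂μ‖ ≤ ‖f‖ := by
    intro μ _ A
    have h1 : ‖∫ x in A, f x.1 ∂μ‖ ≤ ‖f‖ * (μ A).toReal := by
      apply norm_setIntegral_le_of_norm_le_const (measure_lt_top μ A)
        (fun x _ => f.norm_coe_le_norm x.1)
    have h2 : (μ A).toReal ≤ 1 := by
      simpa using ENNReal.toReal_mono ENNReal.one_ne_top (prob_le_one (μ := μ) (s := A))
    calc ‖∫ x in A, f x.1 ∂μ‖ ≤ ‖f‖ * (μ A).toReal := h1
      _ ≤ ‖f‖ * 1 := by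
        exact mul_le_mul_of_nonneg_left h2 (norm_nonneg f)
      _ = ‖f‖ := mul_one _
  have key : Tendsto (fun n => (∫ x in Set.univ ×ˢ B, f x.1 ∂(Ψ (s n)))
      - ∫ x in Set.univ ×ˢ B, f x.1 ∂(Ψ t)) atTop (𝓝 0) := by
    apply squeeze_zero_norm _ hsup
    intro n
    have hbdd : BddAbove (Set.range fun B' : {B : Set S2 // MeasurableSet B} =>
        |(∫ x in Set.univ ×ˢ B'.1, f x.1 ∂(Ψ (s n)))
          - ∫ x in Set.univ ×ˢ B'.1, f x.1 ∂(Ψ t)|) := by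
      refine ⟨2 * ‖f‖, ?_⟩
      rintro y ⟨B', rfl⟩
      simp only [← Real.norm_eq_abs]
      calc ‖(∫ x in Set.univ ×ˢ B'.1, f x.1 ∂(Ψ (s n)))
            - ∫ x in Set.univ ×ˢ B'.1, f x.1 ∂(Ψ t)‖
          ≤ ‖(∫ x in Set.univ ×ˢ B'.1, f x.1 ∂(Ψ (s n)))‖
            + ‖∫ x in Set.univ ×ˢ B'.1, f x.1 ∂(Ψ t)‖ := norm_sub_le _ _
        _ ≤ ‖f‖ + ‖f‖ := add_le_add (hbd _ _) (hbd _ _)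
        _ = 2 * ‖f‖ := by ring
    simpa [Real.norm_eq_abs] using
      le_ciSup hbdd (⟨B, hB⟩ : {B : Set S2 // MeasurableSet B})
  have h2 := key.add_const (∫ x in Set.univ ×ˢ B, f x.1 ∂(Ψ t))
  simpa using h2


-- the approximating functions
noncomputable def sufG (F : Set S1) (k : ℕ) : BoundedContinuousFunction S1 ℝ :=
  BoundedContinuousFunction.mkOfBound
    ⟨fun x => max (1 - k * Metric.infDist x F) 0,
      (continuous_const.sub (continuous_const.mul (Metric.continuous_infDist_pt F))).max
        continuous_const⟩ 1
    (by
      intro x y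
      have h1 : ∀ z : S1, max (1 - k * Metric.infDist z F) 0 ∈ Set.Icc (0:ℝ) 1 := by
        intro z
        refine ⟨le_max_right _ _, max_le ?_ zero_le_one⟩
        have := mul_nonneg (Nat.cast_nonneg (α := ℝ) k) (Metric.infDist_nonneg (x := z) (s := F))
        linarith
      rw [Real.dist_eq, abs_le]
      obtain ⟨hx0, hx1⟩ := h1 x
      obtain ⟨hy0, hy1⟩ := h1 y
      constructor <;> simp only [ContinuousMap.coe_mk] <;> linarith)

lemma sufG_apply (F : Set S1) (k : ℕ) (x : S1) :
    sufG F k x = max (1 - k * Metric.infDist x F) 0 := rfl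

lemma sufG_mem (F : Set S1) (k : ℕ) (x : S1) : sufG F k x ∈ Set.Icc (0:ℝ) 1 := by
  rw [sufG_apply]
  refine ⟨le_max_right _ _, max_le ?_ zero_le_one⟩
  have := mul_nonneg (Nat.cast_nonneg (α := ℝ) k) (Metric.infDist_nonneg (x := x) (s := F))
  linarith

lemma sufG_ge_indicator (F : Set S1) (k : ℕ) (x : S1) :
    F.indicator (fun _ => (1:ℝ)) x ≤ sufG F k x := by
  by_cases hx : x ∈ F
  · rw [Set.indicator_of_mem hx, sufG_apply, Metric.infDist_zero_of_mem hx]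
    simp
  · rw [Set.indicator_of_notMem hx]
    exact (sufG_mem F k x).1

lemma sufG_tendsto {F : Set S1} (hF : IsClosed F) (hFne : F.Nonempty) (x : S1) :
    Tendsto (fun k => sufG F k x) atTop (𝓝 (F.indicator (fun _ => (1:ℝ)) x)) := by
  by_cases hx : x ∈ F
  · rw [Set.indicator_of_mem hx]
    have : ∀ k : ℕ, sufG F k x = 1 := by
      intro k
      rw [sufG_apply, Metric.infDist_zero_of_mem hx]
      simp
    simpa [this] using tendsto_const_nhds (α := ℝ) (f := atTop (α := ℕ))
  · rw [Set.indicator_of_notMem hx]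
    have hd : 0 < Metric.infDist x F := by
      rcases lt_or_eq_of_le (Metric.infDist_nonneg (x := x) (s := F)) with h | h
      · exact h
      · exact absurd ((hF.mem_iff_infDist_zero hFne).mpr h.symm) hx
    apply tendsto_atTop_of_eventually_const (i₀ := Nat.ceil (1 / Metric.infDist x F))
    intro k hk
    rw [sufG_apply, max_eq_right]
    have hk' : 1 / Metric.infDist x F ≤ (k : ℝ) :=
      le_trans (Nat.le_ceil _) (by exact_mod_cast hk)
    have : 1 ≤ (k : ℝ) * Metric.infDist x F := by
      rw [div_le_iff₀ hd] at hk'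
      linarith
    linarith





lemma suf_stepB (Ψ : Kernel S3 (S1 × S2)) [IsMarkovKernel Ψ] (hΨ : SemiUniformFeller Ψ)
    {s : ℕ → S3} {t : S3} (hst : Tendsto s atTop (𝓝 t))
    {F : Set S1} (hF : IsClosed F) {V : Set S2} (hV : MeasurableSet V)
    {ε : ℝ} (hε : 0 < ε) :
    ∀ᶠ n in atTop, (Ψ (s n) (F ×ˢ V)).toReal ≤ (Ψ t (F ×ˢ V)).toReal + ε := by
  haveI := UniformSpace.secondCountable_of_separable S1
  haveI := UniformSpace.secondCountable_of_separable S2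
  rcases F.eq_empty_or_nonempty with rfl | hFne
  · filter_upwards with n
    simp [hε.le]
  -- integrability of the indicator composed with fst
  have hind_eq : ∀ (x : S1 × S2), F.indicator (fun _ => (1:ℝ)) x.1
      = (F ×ˢ (Set.univ : Set S2)).indicator (fun _ => (1:ℝ)) x := by
    intro x
    by_cases hx : x.1 ∈ F <;> simp [Set.indicator, hx, Set.mem_prod]
  have hind_int : ∀ (μ : Measure (S1 × S2)) [IsProbabilityMeasure μ],
      Integrable (fun x : S1 × S2 => F.indicator (fun _ => (1:ℝ)) x.1)
        (μ.restrict (Set.univ ×ˢ V)) := by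
    intro μ _
    have : Integrable (fun x : S1 × S2 => (F ×ˢ (Set.univ : Set S2)).indicator
        (fun _ => (1:ℝ)) x) (μ.restrict (Set.univ ×ˢ V)) :=
      (integrable_const (1:ℝ)).indicator (hF.measurableSet.prod MeasurableSet.univ)
    exact this.congr (Eventually.of_forall fun x => (hind_eq x).symm)
  have hg_int : ∀ (k : ℕ) (μ : Measure (S1 × S2)) [IsProbabilityMeasure μ],
      Integrable (fun x : S1 × S2 => sufG F k x.1) (μ.restrict (Set.univ ×ˢ V)) := by
    intro k μ _
    refine Integrable.mono' (integrable_const ‖sufG F k‖)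
      (((sufG F k).continuous.comp continuous_fst).aestronglyMeasurable.restrict) ?_
    exact Eventually.of_forall fun x => (sufG F k).norm_coe_le_norm x.1
  -- dominated convergence for the limit measure
  have hconv : Tendsto (fun k => ∫ x in Set.univ ×ˢ V, sufG F k x.1 ∂(Ψ t)) atTop
      (𝓝 ((Ψ t (F ×ˢ V)).toReal)) := by
    rw [← suf_setIntegral_indicator (Ψ t) hF.measurableSet V]
    apply tendsto_integral_of_dominated_convergence (fun _ => (1:ℝ))
    · exact fun k => (((sufG F k).continuous.comp continuous_fst).aestronglyMeasurable.restrict)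
    · exact integrable_const 1
    · intro k
      refine Eventually.of_forall fun x => ?_
      rw [Real.norm_eq_abs, abs_le]
      obtain ⟨h0, h1⟩ := sufG_mem F k x.1
      constructor <;> linarith
    · exact Eventually.of_forall fun x => sufG_tendsto hF hFne x.1
  obtain ⟨k0, hk0⟩ := (hconv.eventually_lt_const
    (show (Ψ t (F ×ˢ V)).toReal < (Ψ t (F ×ˢ V)).toReal + ε / 2 by linarith)).exists
  have hA := (suf_stepA Ψ hΨ hst (sufG F k0) hV).eventually_lt_const
    (show (∫ x in Set.univ ×ˢ V, sufG F k0 x.1 ∂(Ψ t))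
      < (∫ x in Set.univ ×ˢ V, sufG F k0 x.1 ∂(Ψ t)) + ε / 2 by linarith)
  filter_upwards [hA] with n hn
  have h1 : (Ψ (s n) (F ×ˢ V)).toReal ≤ ∫ x in Set.univ ×ˢ V, sufG F k0 x.1 ∂(Ψ (s n)) := by
    rw [← suf_setIntegral_indicator (Ψ (s n)) hF.measurableSet V]
    exact integral_mono (hind_int (Ψ (s n))) (hg_int k0 (Ψ (s n)))
      (fun x => sufG_ge_indicator F k0 x.1)
  linarith




lemma suf_stepC (Ψ : Kernel S3 (S1 × S2)) [IsMarkovKernel Ψ] (hΨ : SemiUniformFeller Ψ)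
    {s : ℕ → S3} {t : S3} (hst : Tendsto s atTop (𝓝 t))
    {U : Set S1} (hU : IsOpen U) {V : Set S2} (hV : MeasurableSet V)
    {ε : ℝ} (hε : 0 < ε) :
    ∀ᶠ n in atTop, (Ψ t (U ×ˢ V)).toReal ≤ (Ψ (s n) (U ×ˢ V)).toReal + ε := by
  have hsplit : ∀ (μ : Measure (S1 × S2)) [IsProbabilityMeasure μ],
      (μ (Set.univ ×ˢ V)).toReal = (μ (U ×ˢ V)).toReal + (μ (Uᶜ ×ˢ V)).toReal := by
    intro μ _
    rw [← ENNReal.toReal_add (measure_ne_top μ _) (measure_ne_top μ _),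
      ← measure_union ?_ (hU.isClosed_compl.measurableSet.prod hV)]
    · rw [← Set.union_prod, Set.union_compl_self]
    · rw [Set.disjoint_left]
      rintro ⟨x, y⟩ ⟨hxU, -⟩ ⟨hxU', -⟩
      exact hxU' hxU
  have huniv : Tendsto (fun n => (Ψ (s n) (Set.univ ×ˢ V)).toReal) atTop
      (𝓝 ((Ψ t (Set.univ ×ˢ V)).toReal)) := by
    have h := suf_stepA Ψ hΨ hst 1 hV
    simp only [suf_int_one] at h
    exact h
  have h1 := huniv.eventually_const_lt
    (show (Ψ t (Set.univ ×ˢ V)).toReal - ε / 2 < (Ψ t (Set.univ ×ˢ V)).toReal by linarith)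
  have h2 := suf_stepB Ψ hΨ hst hU.isClosed_compl hV (show (0:ℝ) < ε / 2 by linarith)
  filter_upwards [h1, h2] with n h1n h2n
  have e1 := hsplit (Ψ t)
  have e2 := hsplit (Ψ (s n))
  linarith

lemma suf_stepD (Ψ : Kernel S3 (S1 × S2)) [IsMarkovKernel Ψ] (hΨ : SemiUniformFeller Ψ)
    {s : ℕ → S3} {t : S3} (hst : Tendsto s atTop (𝓝 t))
    (m : ℕ) (U : ℕ → Set S1) (hU : ∀ i, IsOpen (U i))
    (V : ℕ → Set S2) (hV : ∀ i, MeasurableSet (V i))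
    {ε : ℝ} (hε : 0 < ε) :
    ∀ᶠ n in atTop, (Ψ t (⋃ i ∈ Finset.range m, U i ×ˢ V i)).toReal
      ≤ (Ψ (s n) (⋃ i ∈ Finset.range m, U i ×ˢ V i)).toReal + ε := by
  classical
  set A : Finset ℕ → Set S1 := fun J => ⋃ i ∈ J, U i with hAdef
  set W : Finset ℕ → Set S2 := fun J => {y | ∀ i ∈ Finset.range m, (y ∈ V i ↔ i ∈ J)}
    with hWdef
  have hyW : ∀ (J : Finset ℕ) (y : S2), y ∈ W J ↔ ∀ i ∈ Finset.range m, (y ∈ V i ↔ i ∈ J) := by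
    intro J y
    rw [hWdef]
    rfl
  have hA : ∀ J, IsOpen (A J) := fun J => isOpen_biUnion fun i _ => hU i
  have hW : ∀ J, MeasurableSet (W J) := by
    intro J
    have hWeq : W J = ⋂ i ∈ Finset.range m, (if i ∈ J then V i else (V i)ᶜ) := by
      ext y
      rw [hyW]
      simp only [Set.mem_iInter]
      apply forall_congr'
      intro i
      apply forall_congr'
      intro hi
      by_cases hiJ : i ∈ J <;> simp [hiJ]
    rw [hWeq]
    exact MeasurableSet.biInter (Finset.range m).countable_toSet (fun i _ => by
      by_cases hiJ : i ∈ J <;> simp [hiJ, hV i, (hV i).compl])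
  have hsets : (⋃ i ∈ Finset.range m, U i ×ˢ V i)
      = ⋃ J ∈ (Finset.range m).powerset, (A J ×ˢ W J) := by
    ext ⟨x, y⟩
    simp only [Set.mem_iUnion, Set.mem_prod, exists_prop]
    constructor
    · rintro ⟨i, hi, hxU, hyV⟩
      refine ⟨(Finset.range m).filter (fun j => y ∈ V j),
        Finset.mem_powerset.mpr (Finset.filter_subset _ _), ?_, ?_⟩
      · rw [hAdef]
        exact Set.mem_biUnion (Finset.mem_filter.mpr ⟨hi, hyV⟩) hxU
      · rw [hyW]
        intro j hj
        simp [Finset.mem_filter, hj]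
    · rintro ⟨J, hJ, hxA, hyWJ⟩
      rw [hAdef] at hxA
      simp only [Set.mem_iUnion, exists_prop] at hxA
      obtain ⟨i, hiJ, hxU⟩ := hxA
      have hiRange : i ∈ Finset.range m := Finset.mem_powerset.mp hJ hiJ
      exact ⟨i, hiRange, hxU, ((hyW J y).mp hyWJ i hiRange).mpr hiJ⟩
  have hdisj : (↑(Finset.range m).powerset : Set (Finset ℕ)).PairwiseDisjoint
      (fun J => A J ×ˢ W J) := by
    intro J hJ K hK hJK
    rw [Function.onFun, Set.disjoint_left]
    rintro ⟨x, y⟩ ⟨-, hyJ⟩ ⟨-, hyK⟩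
    apply hJK
    ext i
    by_cases hi : i ∈ Finset.range m
    · exact (((hyW J y).mp hyJ i hi).symm).trans ((hyW K y).mp hyK i hi)
    · constructor <;> intro hmem
      · exact absurd (Finset.mem_powerset.mp (Finset.mem_coe.mp hJ) hmem) hi
      · exact absurd (Finset.mem_powerset.mp (Finset.mem_coe.mp hK) hmem) hi
  have hmeas : ∀ J ∈ (Finset.range m).powerset, MeasurableSet (A J ×ˢ W J) :=
    fun J _ => (hA J).measurableSet.prod (hW J)
  have hval : ∀ (μ : Measure (S1 × S2)) [IsFiniteMeasure μ],
      (μ (⋃ i ∈ Finset.range m, U i ×ˢ V i)).toReal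
        = ∑ J ∈ (Finset.range m).powerset, (μ (A J ×ˢ W J)).toReal := by
    intro μ _
    rw [hsets, measure_biUnion_finset hdisj hmeas,
      ENNReal.toReal_sum (fun J _ => measure_ne_top μ _)]
  set N : ℕ := ((Finset.range m).powerset).card with hN
  have hε' : 0 < ε / (N + 1) := by positivity
  have hrect : ∀ᶠ n in atTop, ∀ J ∈ (Finset.range m).powerset,
      (Ψ t (A J ×ˢ W J)).toReal ≤ (Ψ (s n) (A J ×ˢ W J)).toReal + ε / (N + 1) := by
    rw [eventually_all_finset]
    intro J _
    exact suf_stepC Ψ hΨ hst (hA J) (hW J) hε'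
  filter_upwards [hrect] with n hn
  rw [hval (Ψ t), hval (Ψ (s n))]
  calc ∑ J ∈ (Finset.range m).powerset, (Ψ t (A J ×ˢ W J)).toReal
      ≤ ∑ J ∈ (Finset.range m).powerset, ((Ψ (s n) (A J ×ˢ W J)).toReal + ε / (N + 1)) :=
        Finset.sum_le_sum hn
    _ = (∑ J ∈ (Finset.range m).powerset, (Ψ (s n) (A J ×ˢ W J)).toReal)
        + N * (ε / (N + 1)) := by
        rw [Finset.sum_add_distrib, Finset.sum_const, hN, nsmul_eq_mul]
    _ ≤ (∑ J ∈ (Finset.range m).powerset, (Ψ (s n) (A J ×ˢ W J)).toReal) + ε := by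
        have hNpos : (0:ℝ) < N + 1 := by positivity
        have : (N : ℝ) * (ε / (N + 1)) ≤ ε := by
          rw [mul_div_assoc', div_le_iff₀ hNpos]
          nlinarith
        linarith





lemma suf_key (Ψ : Kernel S3 (S1 × S2)) [IsMarkovKernel Ψ] (hΨ : SemiUniformFeller Ψ)
    {s : ℕ → S3} {t : S3} (hst : Tendsto s atTop (𝓝 t))
    {G : Set (S1 × S2)} (hG : IsOpen G) {ε : ℝ} (hε : 0 < ε) :
    ∀ᶠ n in atTop, (Ψ t G).toReal ≤ (Ψ (s n) G).toReal + ε := by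
  haveI := UniformSpace.secondCountable_of_separable S1
  haveI := UniformSpace.secondCountable_of_separable S2
  obtain ⟨b1, hb1c, -, hb1⟩ := TopologicalSpace.exists_countable_basis S1
  obtain ⟨b2, hb2c, -, hb2⟩ := TopologicalSpace.exists_countable_basis S2
  obtain ⟨S, hSsub, hSeq⟩ := (hb1.prod hb2).open_eq_sUnion hG
  have hScount : S.Countable :=
    Set.Countable.mono hSsub (Set.Countable.image2 hb1c hb2c _)
  rcases S.eq_empty_or_nonempty with rfl | hSne
  · filter_upwards with n
    rw [hSeq]
    simp [hε.le]
  obtain ⟨e, hfeq⟩ := Set.Countable.exists_eq_range hScount hSne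
  have hmem : ∀ k : ℕ, ∃ (u : Set S1) (v : Set S2),
      IsOpen u ∧ MeasurableSet v ∧ e k = u ×ˢ v := by
    intro k
    have hk : e k ∈ Set.image2 (fun u v => u ×ˢ v) b1 b2 :=
      hSsub (hfeq ▸ Set.mem_range_self k)
    obtain ⟨u, hu, v, hv, huv⟩ := hk
    exact ⟨u, v, hb1.isOpen hu, (hb2.isOpen hv).measurableSet, huv.symm⟩
  choose U V hUopen hVmeas hprod using hmem
  have hGeq : G = ⋃ k, U k ×ˢ V k := by
    rw [hSeq, hfeq, Set.sUnion_range]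
    exact Set.iUnion_congr hprod
  set T : ℕ → Set (S1 × S2) := fun m => ⋃ i ∈ Finset.range m, U i ×ˢ V i with hTdef
  have hTmono : Monotone T := by
    intro a b hab
    exact Set.biUnion_subset_biUnion_left (fun i hi =>
      Finset.mem_range.mpr (lt_of_lt_of_le (Finset.mem_range.mp hi) hab))
  have hTunion : (⋃ m, T m) = G := by
    rw [hGeq]
    ext x
    simp only [hTdef, Set.mem_iUnion, Finset.mem_range, exists_prop]
    constructor
    · rintro ⟨m, i, him, hx⟩
      exact ⟨i, hx⟩
    · rintro ⟨i, hx⟩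
      exact ⟨i + 1, i, Nat.lt_succ_self i, hx⟩
  have hTsub : ∀ m, T m ⊆ G := by
    intro m
    rw [← hTunion]
    exact Set.subset_iUnion T m
  have htend : Tendsto (fun m => ((Ψ t) (T m)).toReal) atTop (𝓝 ((Ψ t G).toReal)) := by
    have h1 : Tendsto (fun m => (Ψ t) (T m)) atTop (𝓝 ((Ψ t) G)) := by
      have := tendsto_measure_iUnion_atTop (μ := Ψ t) hTmono
      rwa [hTunion] at this
    exact (ENNReal.tendsto_toReal (measure_ne_top _ G)).comp h1
  obtain ⟨m, hm⟩ := (htend.eventually_const_lt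
    (show (Ψ t G).toReal - ε / 2 < (Ψ t G).toReal by linarith)).exists
  have hD := suf_stepD Ψ hΨ hst m U hUopen V hVmeas (show (0:ℝ) < ε / 2 by linarith)
  filter_upwards [hD] with n hn
  have hmono : ((Ψ (s n)) (T m)).toReal ≤ ((Ψ (s n)) G).toReal :=
    ENNReal.toReal_mono (measure_ne_top _ G) (measure_mono (hTsub m))
  have hTm : T m = ⋃ i ∈ Finset.range m, U i ×ˢ V i := rfl
  rw [hTm] at hm hmono
  linarith


end SUFAux

/-- If a stochastic kernel `Ψ` on `S1 × S2` given `S3` is semi-uniform Feller, then `Ψ` is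
weakly continuous: integrals of every bounded continuous `g : S1 × S2 → ℝ` converge along every
convergent sequence of the parameter. -/
theorem semiUniformFeller_weakly_continuous
    {S1 S2 S3 : Type*}
    [MetricSpace S1] [TopologicalSpace.SeparableSpace S1] [MeasurableSpace S1] [BorelSpace S1]
    [StandardBorelSpace S1] [Nonempty S1]
    [MetricSpace S2] [TopologicalSpace.SeparableSpace S2] [MeasurableSpace S2] [BorelSpace S2]
    [StandardBorelSpace S2] [Nonempty S2]
    [MetricSpace S3] [TopologicalSpace.SeparableSpace S3] [MeasurableSpace S3] [BorelSpace S3]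
    [StandardBorelSpace S3] [Nonempty S3]
    (Ψ : Kernel S3 (S1 × S2)) [IsMarkovKernel Ψ] (hΨ : SemiUniformFeller Ψ) :
    ∀ (s : ℕ → S3) (t : S3), Tendsto s atTop (𝓝 t) →
      ∀ g : BoundedContinuousFunction (S1 × S2) ℝ,
        Tendsto (fun n => ∫ x, g x ∂(Ψ (s n))) atTop (𝓝 (∫ x, g x ∂(Ψ t))) := by
  intro s t hst g
  haveI := UniformSpace.secondCountable_of_separable S1
  haveI := UniformSpace.secondCountable_of_separable S2
  set P : ℕ → ProbabilityMeasure (S1 × S2) := fun n => ⟨Ψ (s n), inferInstance⟩ with hP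
  set Pt : ProbabilityMeasure (S1 × S2) := ⟨Ψ t, inferInstance⟩ with hPt
  have htend : Tendsto P atTop (𝓝 Pt) := by
    apply MeasureTheory.tendsto_of_forall_isOpen_le_liminf
    intro G hG
    apply le_of_forall_lt
    intro c hc
    obtain ⟨c', hcc', hc'⟩ := exists_between hc
    have hcb : IsCoboundedUnder (· ≥ ·) atTop (fun i => P i G) :=
      (isBoundedUnder_of ⟨1, fun n => ProbabilityMeasure.apply_le_one _ _⟩).isCoboundedUnder_ge
    refine lt_of_lt_of_le hcc' (le_liminf_of_le hcb ?_)
    have hPtG : ((Pt G : ℝ≥0) : ℝ) = (Ψ t G).toReal := rfl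
    have hPnG : ∀ n, ((P n G : ℝ≥0) : ℝ) = (Ψ (s n) G).toReal := fun n => rfl
    have hεpos : (0:ℝ) < ((Pt G : ℝ≥0) : ℝ) - (c' : ℝ) := by
      rw [sub_pos]
      exact_mod_cast hc'
    have := suf_key Ψ hΨ hst hG (ε := ((Pt G : ℝ≥0) : ℝ) - (c' : ℝ)) hεpos
    filter_upwards [this] with n hn
    have : (c' : ℝ) ≤ ((P n G : ℝ≥0) : ℝ) := by
      rw [hPnG]
      rw [hPtG] at hn
      linarith
    exact_mod_cast this
  have := ProbabilityMeasure.tendsto_iff_forall_integral_tendsto.mp htend g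
  exact this
end
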